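/- arXiv:1512.01829 — 3 statements merged into one kernel-verified Lean document; each statement's English description precedes it below -/
import Mathlib

section
/- Let (G,M) be a MaxEDP instance with a fractional solution (f,x), (T,β) a tree decomposition of G of width less than r, and t a node of T. If t is good with respect to (f,x), then t is safe with respect to (f,x): there is a multicommodity flow g in G(t), respecting the edge capacities of G(t), that routes at least x(z)/(4r) units of flow (indeed, x(z) units) from every vertex z ∈ γ(t) to σ(t). -/
open SimpleGraph Finset
open scoped Classical

namespace Paper

noncomputable section

variable {V : Type} [Fintype V] [DecidableEq V] {τ : Type} [Fintype τ]

/-! ### Multicommodity flows as weighted path systems -/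

/-- Total amount of flow sent on paths from `u` to `v`. -/
def pairFlow {G : SimpleGraph V} (f : ∀ u v : V, G.Path u v → ℝ) (u v : V) : ℝ :=
  ∑ p : G.Path u v, f u v p

/-- Total amount of flow on paths using the edge `e`. -/
def edgeLoad {G : SimpleGraph V} (f : ∀ u v : V, G.Path u v → ℝ) (e : Sym2 V) : ℝ :=
  ∑ u, ∑ v, ∑ p : G.Path u v, if e ∈ (p : G.Walk u v).edges then f u v p else 0

/-- Total amount of flow on paths using the vertex `w`. -/
def vertLoad {G : SimpleGraph V} (f : ∀ u v : V, G.Path u v → ℝ) (w : V) : ℝ :=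
  ∑ u, ∑ v, ∑ p : G.Path u v, if w ∈ (p : G.Walk u v).support then f u v p else 0

/-- The marginal of `z`: the total amount of flow routed for `z`,
i.e. on paths having `z` as an endpoint. -/
def margOf {G : SimpleGraph V} (f : ∀ u v : V, G.Path u v → ℝ) (z : V) : ℝ :=
  (∑ v, pairFlow f z v) + ∑ u, pairFlow f u z

/-- The total value `|f|` of a multicommodity flow for the pairs `M`. -/
def valueOf {G : SimpleGraph V} (f : ∀ u v : V, G.Path u v → ℝ) (M : Finset (V × V)) : ℝ :=
  ∑ m ∈ M, pairFlow f m.1 m.2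

/-- The pairs `M` form a matching on the terminals: all the endpoints are distinct. -/
def PairsMatching (M : Finset (V × V)) : Prop :=
  (∀ m ∈ M, m.1 ≠ m.2) ∧
    ∀ m ∈ M, ∀ m' ∈ M, m ≠ m' →
      m.1 ≠ m'.1 ∧ m.1 ≠ m'.2 ∧ m.2 ≠ m'.1 ∧ m.2 ≠ m'.2

/-- `v` is a terminal of the collection of pairs `M`. -/
def Terminal (M : Finset (V × V)) (v : V) : Prop :=
  ∃ m ∈ M, m.1 = v ∨ m.2 = v

/-- A feasible fractional solution `(f, x)` to the multicommodity flow relaxation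
`EDP-LP` of MaxEDP (edge capacities): nonnegative flow between the pairs of `M` only,
routing `x_i ≤ 1` for each pair, satisfying the edge capacities.  The marginals `x`
are recovered as `pairFlow f` and `margOf f`. -/
structure EDPFlow (G : SimpleGraph V) (cap : Sym2 V → ℕ) (M : Finset (V × V)) where
  f : ∀ u v : V, G.Path u v → ℝ
  nonneg : ∀ u v p, 0 ≤ f u v p
  supp : ∀ u v, (u, v) ∉ M → ∀ p, f u v p = 0
  le_one : ∀ m ∈ M, pairFlow f m.1 m.2 ≤ 1
  feas : ∀ e : Sym2 V, edgeLoad f e ≤ (cap e : ℝ)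

def EDPFlow.value {G : SimpleGraph V} {cap : Sym2 V → ℕ} {M : Finset (V × V)}
    (F : EDPFlow G cap M) : ℝ := valueOf F.f M

def EDPFlow.marg {G : SimpleGraph V} {cap : Sym2 V → ℕ} {M : Finset (V × V)}
    (F : EDPFlow G cap M) (z : V) : ℝ := margOf F.f z

/-- A feasible fractional solution to the multicommodity flow relaxation of
MaxNDP (node capacities). -/
structure NDPFlow (G : SimpleGraph V) (cap : V → ℕ) (M : Finset (V × V)) where
  f : ∀ u v : V, G.Path u v → ℝ
  nonneg : ∀ u v p, 0 ≤ f u v p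
  supp : ∀ u v, (u, v) ∉ M → ∀ p, f u v p = 0
  le_one : ∀ m ∈ M, pairFlow f m.1 m.2 ≤ 1
  feas : ∀ w : V, vertLoad f w ≤ (cap w : ℝ)

def NDPFlow.value {G : SimpleGraph V} {cap : V → ℕ} {M : Finset (V × V)}
    (F : NDPFlow G cap M) : ℝ := valueOf F.f M

def NDPFlow.marg {G : SimpleGraph V} {cap : V → ℕ} {M : Finset (V × V)}
    (F : NDPFlow G cap M) (z : V) : ℝ := margOf F.f z

/-- There is a feasible integral routing (with congestion `con`) of at least `q`
of the pairs of `M`, subject to edge capacities: a subset `R ⊆ M` of size at least `q`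
together with a choice of a path for each pair of `R` such that every edge `e`
is on at most `con * cap e` of the chosen paths. -/
def HasEDPRouting (G : SimpleGraph V) (cap : Sym2 V → ℕ) (M : Finset (V × V))
    (con : ℕ) (q : ℝ) : Prop :=
  ∃ (R : Finset (V × V)) (route : ∀ m ∈ R, G.Path m.1 m.2),
    R ⊆ M ∧ q ≤ (R.card : ℝ) ∧
      ∀ e : Sym2 V,
        (R.attach.filter fun m => e ∈ (route m.1 m.2).val.edges).card ≤ con * cap e

/-- There is a feasible integral routing (with congestion `con`) of at least `q`
of the pairs of `M`, subject to node capacities. -/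
def HasNDPRouting (G : SimpleGraph V) (cap : V → ℕ) (M : Finset (V × V))
    (con : ℕ) (q : ℝ) : Prop :=
  ∃ (R : Finset (V × V)) (route : ∀ m ∈ R, G.Path m.1 m.2),
    R ⊆ M ∧ q ≤ (R.card : ℝ) ∧
      ∀ w : V,
        (R.attach.filter fun m => w ∈ (route m.1 m.2).val.support).card ≤ con * cap w

/-! ### Induced subgraphs on vertex subsets -/

/-- The subgraph of `G` induced on `U` (as a graph on the same vertex set, with all
vertices outside `U` isolated). -/
def restrictG (G : SimpleGraph V) (U : Set V) : SimpleGraph V where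
  Adj u v := u ∈ U ∧ v ∈ U ∧ G.Adj u v
  symm := ⟨fun u v h => ⟨h.2.1, h.1, h.2.2.symm⟩⟩
  loopless := ⟨fun v h => G.loopless.irrefl v h.2.2⟩

lemma restrictG_le (G : SimpleGraph V) (U : Set V) : restrictG G U ≤ G :=
  fun _ _ h => h.2.2

/-- Push a path along a subgraph inclusion. -/
def pathMapLe {G G' : SimpleGraph V} (h : G ≤ G') {u v : V} (p : G.Path u v) :
    G'.Path u v :=
  ⟨(p : G.Walk u v).mapLe h, (SimpleGraph.Walk.mapLe_isPath h).mpr p.prop⟩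

/-- The vertex set `s` is (nonempty and) connected in `G`. -/
def ConnOn (G : SimpleGraph V) (s : Finset V) : Prop :=
  s.Nonempty ∧ ∀ u ∈ s, ∀ v ∈ s, (restrictG G ↑s).Reachable u v

/-! ### Rooted tree decompositions -/

/-- The parent adhesion `σ(t) = β(t) ∩ β(parent t)` (empty at the root). -/
def sigmaOf (parent : τ → τ) (root : τ) (bag : τ → Finset V) (t : τ) : Finset V :=
  if t = root then ∅ else bag t ∩ bag (parent t)

/-- `γ(t)`: the union of the bags at the descendants of `t`. -/
def gammaOf (parent : τ → τ) (bag : τ → Finset V) (t : τ) : Finset V :=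
  Finset.univ.filter fun v => ∃ s, (∃ n, parent^[n] s = t) ∧ v ∈ bag s

/-- A rooted tree decomposition of `G`, encoded by the parent map of the rooted
tree on the node set `τ`.  The last two axioms state that for every vertex `v` the
set of nodes whose bag contains `v` is connected in the tree (it is closed under
taking intermediate ancestors, and any two such nodes have a common ancestor
whose bag still contains `v`). -/
structure TreeDecomp (τ : Type) [Fintype τ] {V : Type} [Fintype V] [DecidableEq V]
    (G : SimpleGraph V) where
  root : τ
  parent : τ → τ
  parent_root : parent root = root
  reach_root : ∀ t : τ, ∃ n : ℕ, parent^[n] t = root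
  bag : τ → Finset V
  edge_in_bag : ∀ u v : V, G.Adj u v → ∃ t, u ∈ bag t ∧ v ∈ bag t
  vert_in_bag : ∀ v : V, ∃ t, v ∈ bag t
  interval : ∀ (v : V) (t : τ) (m n : ℕ), m ≤ n → v ∈ bag t → v ∈ bag (parent^[n] t) →
    v ∈ bag (parent^[m] t)
  meet : ∀ (v : V) (t s : τ), v ∈ bag t → v ∈ bag s →
    ∃ m n : ℕ, parent^[m] t = parent^[n] s ∧ v ∈ bag (parent^[m] t)

variable {G : SimpleGraph V}

/-- The tree of the decomposition is a path rooted at one of its endpoints: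
every node has at most one child. -/
def TreeDecomp.IsPathDecomp (D : TreeDecomp τ G) : Prop :=
  ∀ t s : τ, D.parent t = D.parent s → t ≠ D.parent t → s ≠ D.parent s → t = s

def TreeDecomp.sigma (D : TreeDecomp τ G) (t : τ) : Finset V :=
  sigmaOf D.parent D.root D.bag t

def TreeDecomp.gamma (D : TreeDecomp τ G) (t : τ) : Finset V :=
  gammaOf D.parent D.bag t

def TreeDecomp.alpha (D : TreeDecomp τ G) (t : τ) : Finset V :=
  D.gamma t \ D.sigma t

/-- The graph `G(t) = G[γ(t)] − E(G[σ(t)])`. -/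
def TreeDecomp.Gt (D : TreeDecomp τ G) (t : τ) : SimpleGraph V where
  Adj u v := G.Adj u v ∧ u ∈ D.gamma t ∧ v ∈ D.gamma t ∧ ¬(u ∈ D.sigma t ∧ v ∈ D.sigma t)
  symm := ⟨fun u v h => ⟨h.1.symm, h.2.2.1, h.2.1, fun hc => h.2.2.2 ⟨hc.2, hc.1⟩⟩⟩
  loopless := ⟨fun v h => G.loopless.irrefl v h.1⟩

/-! ### Flows to a set of vertices -/

/-- A feasible (edge-capacitated) flow in `H` whose flow paths all end in `S`. -/
structure EFlowToSet (H : SimpleGraph V) (cap : Sym2 V → ℕ) (S : Finset V) where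
  g : ∀ u v : V, H.Path u v → ℝ
  nonneg : ∀ u v p, 0 ≤ g u v p
  ends : ∀ u v p, g u v p ≠ 0 → v ∈ S
  feas : ∀ e : Sym2 V, edgeLoad g e ≤ (cap e : ℝ)

/-- The amount of flow routed from `z` (to the target set). -/
def EFlowToSet.fromAmt {H : SimpleGraph V} {cap : Sym2 V → ℕ} {S : Finset V}
    (F : EFlowToSet H cap S) (z : V) : ℝ :=
  ∑ v, pairFlow F.g z v

/-- A feasible (node-capacitated) flow in `H` whose flow paths all end in `S`. -/
structure NFlowToSet (H : SimpleGraph V) (cap : V → ℕ) (S : Finset V) where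
  g : ∀ u v : V, H.Path u v → ℝ
  nonneg : ∀ u v p, 0 ≤ g u v p
  ends : ∀ u v p, g u v p ≠ 0 → v ∈ S
  feas : ∀ w : V, vertLoad g w ≤ (cap w : ℝ)

def NFlowToSet.fromAmt {H : SimpleGraph V} {cap : V → ℕ} {S : Finset V}
    (F : NFlowToSet H cap S) (z : V) : ℝ :=
  ∑ v, pairFlow F.g z v

/-! ### Safe and good nodes -/

/-- A node `t` is safe w.r.t. an (edge-capacitated) fractional solution `F` if some
feasible flow in `G(t)` routes at least `x(z)/(4r)` from every `z ∈ γ(t)` to `σ(t)`. -/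
def ESafe {M : Finset (V × V)} (cap : Sym2 V → ℕ) (D : TreeDecomp τ G) (r : ℕ)
    (F : EDPFlow G cap M) (t : τ) : Prop :=
  ∃ gf : EFlowToSet (D.Gt t) cap (D.sigma t),
    ∀ z ∈ D.gamma t, F.marg z / (4 * (r : ℝ)) ≤ gf.fromAmt z

/-- A node `t` is safe w.r.t. a node-capacitated fractional solution `F`. -/
def NSafe {M : Finset (V × V)} (cap : V → ℕ) (D : TreeDecomp τ G) (r : ℕ)
    (F : NDPFlow G cap M) (t : τ) : Prop :=
  ∃ gf : NFlowToSet (D.Gt t) cap (D.sigma t),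
    ∀ z ∈ D.gamma t, F.marg z / (4 * (r : ℝ)) ≤ gf.fromAmt z

/-- `t` is good w.r.t. a flow `f` (for the decomposition data `parent`, `root`, `bag`):
every flow path in the support of `f` with an endpoint in `γ(t)` intersects `σ(t)`. -/
def GoodWrt {G : SimpleGraph V} (f : ∀ u v : V, G.Path u v → ℝ)
    (parent : τ → τ) (root : τ) (bag : τ → Finset V) (t : τ) : Prop :=
  ∀ (u v : V) (p : G.Path u v), f u v p ≠ 0 →
    (u ∈ gammaOf parent bag t ∨ v ∈ gammaOf parent bag t) →
    ∃ w ∈ sigmaOf parent root bag t, w ∈ (p : G.Walk u v).support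

def EGood {M : Finset (V × V)} {cap : Sym2 V → ℕ} (D : TreeDecomp τ G)
    (F : EDPFlow G cap M) (t : τ) : Prop :=
  GoodWrt F.f D.parent D.root D.bag t

def NGood {M : Finset (V × V)} {cap : V → ℕ} (D : TreeDecomp τ G)
    (F : NDPFlow G cap M) (t : τ) : Prop :=
  GoodWrt F.f D.parent D.root D.bag t

/-- The total capacity of the edge cut `δ(U)`. -/
def cutCap (G : SimpleGraph V) (cap : Sym2 V → ℕ) (U : Finset V) : ℝ :=
  ∑ u ∈ U, ∑ v ∈ Uᶜ, if G.Adj u v then (cap s(u, v) : ℝ) else 0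

/-! ### Multicommodity flows with demands, well-linkedness -/

/-- A feasible edge-capacitated multicommodity flow routing at least `dem u v`
between every pair `(u, v)`. -/
structure EMCFlow (H : SimpleGraph V) (cap : Sym2 V → ℕ) (dem : V → V → ℝ) where
  g : ∀ u v : V, H.Path u v → ℝ
  nonneg : ∀ u v p, 0 ≤ g u v p
  routes : ∀ u v : V, dem u v ≤ pairFlow g u v
  feas : ∀ e : Sym2 V, edgeLoad g e ≤ (cap e : ℝ)

/-- A feasible node-capacitated multicommodity flow routing at least `dem u v`
between every pair `(u, v)`. -/
structure NMCFlow (H : SimpleGraph V) (cap : V → ℕ) (dem : V → V → ℝ) where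
  g : ∀ u v : V, H.Path u v → ℝ
  nonneg : ∀ u v p, 0 ≤ g u v p
  routes : ∀ u v : V, dem u v ≤ pairFlow g u v
  feas : ∀ w : V, vertLoad g w ≤ (cap w : ℝ)

/-- `X` is `π`-flow-well-linked in the edge-capacitated graph `H`. -/
def FlowWellLinked (H : SimpleGraph V) (cap : Sym2 V → ℕ) (X : Finset V)
    (π : V → ℝ) : Prop :=
  Nonempty (EMCFlow H cap fun u v =>
    if u ∈ X ∧ v ∈ X then π u * π v / (∑ w ∈ X, π w) else 0)

/-- The pairs of `M` with both endpoints in `s`. -/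
def inducedPairs (M : Finset (V × V)) (s : Finset V) : Finset (V × V) :=
  M.filter fun m => m.1 ∈ s ∧ m.2 ∈ s

/-- The set of endpoints of the pairs of `M`. -/
def endpointsOf (M : Finset (V × V)) : Finset V :=
  M.image Prod.fst ∪ M.image Prod.snd

/-! ### Minors, graph classes, torsos -/

/-- `H` is a minor of `G`, via disjoint connected branch sets. -/
def IsMinorOf {W : Type} (H : SimpleGraph W) (G : SimpleGraph V) : Prop :=
  ∃ φ : W → Finset V,
    (∀ w, ConnOn G (φ w)) ∧
    (∀ w w', w ≠ w' → Disjoint (φ w) (φ w')) ∧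
    (∀ w w', H.Adj w w' → ∃ a ∈ φ w, ∃ b ∈ φ w', G.Adj a b)

/-- A class of (finite) graphs, given by its members on the canonical vertex sets. -/
def MinorClosed (𝒢 : ∀ n : ℕ, SimpleGraph (Fin n) → Prop) : Prop :=
  ∀ {n m : ℕ} (G : SimpleGraph (Fin n)) (H : SimpleGraph (Fin m)),
    𝒢 n G → IsMinorOf H G → 𝒢 m H

/-- A finite graph belongs to the class `𝒢` (up to isomorphism). -/
def InClass (𝒢 : ∀ n : ℕ, SimpleGraph (Fin n) → Prop) {W : Type}
    (H : SimpleGraph W) : Prop :=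
  ∃ (n : ℕ) (H' : SimpleGraph (Fin n)), 𝒢 n H' ∧ Nonempty (H ≃g H')

/-- The torso at `t`: the subgraph induced on `β(t)`, with all adhesions of tree edges
incident to `t` turned into cliques (as a graph on `V`; restrict to the bag to get
the usual torso). -/
def TreeDecomp.torso (D : TreeDecomp τ G) (t : τ) : SimpleGraph V :=
  SimpleGraph.fromRel fun u v =>
    u ∈ D.bag t ∧ v ∈ D.bag t ∧
      (G.Adj u v ∨ (u ∈ D.sigma t ∧ v ∈ D.sigma t) ∨
        ∃ s : τ, s ≠ D.root ∧ D.parent s = t ∧ u ∈ D.sigma s ∧ v ∈ D.sigma s)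

/-! ### Treedepth -/

/-- The connected component of `v` in `G` restricted to `s`. -/
def compOf (G : SimpleGraph V) (s : Finset V) (v : V) : Finset V :=
  s.filter fun u => (restrictG G ↑s).Reachable v u

/-- Treedepth of `G[s]`, computed with fuel (the recursion terminates before the
fuel runs out, since both deleting a vertex and passing to a connected component of
a disconnected graph strictly decrease the number of vertices). -/
def tdAux (G : SimpleGraph V) : ℕ → Finset V → ℕ
  | 0, _ => 0
  | fuel + 1, s =>
    if hs : s.Nonempty then
      if ConnOn G s then
        1 + s.inf' hs fun v => tdAux G fuel (s.erase v)
      else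
        s.sup fun v => tdAux G fuel (compOf G s v)
    else 0

/-- The treedepth of the subgraph of `G` induced on `s`:  `td(∅) = 0`;
`td(G) = 1 + min_v td(G − v)` for a connected nonempty `G`; and `td(G)` is the maximum
of the treedepths of the connected components for a disconnected `G`. -/
def treedepth (G : SimpleGraph V) (s : Finset V) : ℕ :=
  tdAux G s.card s

section GoodSafeAux

variable {G : SimpleGraph V}

lemma bag_subset_gamma (D : TreeDecomp τ G) (t : τ) : D.bag t ⊆ D.gamma t := by
  intro v hv
  simp only [TreeDecomp.gamma, gammaOf, Finset.mem_filter, Finset.mem_univ, true_and]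
  exact ⟨t, ⟨0, rfl⟩, hv⟩

lemma sigma_subset_bag (D : TreeDecomp τ G) (t : τ) : D.sigma t ⊆ D.bag t := by
  unfold TreeDecomp.sigma sigmaOf
  split
  · simp
  · exact Finset.inter_subset_left

lemma Gt_le (D : TreeDecomp τ G) (t : τ) : D.Gt t ≤ G := fun _ _ h => h.1

/-- Separator property: a vertex of `γ(t)` adjacent to a vertex outside `γ(t)`
lies in `σ(t)`. -/
lemma sep (D : TreeDecomp τ G) (t : τ) {z b : V} (hz : z ∈ D.gamma t)
    (hzb : G.Adj z b) (hb : b ∉ D.gamma t) : z ∈ D.sigma t := by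
  simp only [TreeDecomp.gamma, gammaOf, Finset.mem_filter, Finset.mem_univ, true_and]
    at hz hb
  push_neg at hb
  obtain ⟨s', ⟨k, hk⟩, hzs'⟩ := hz
  obtain ⟨s, hus, hvs⟩ := D.edge_in_bag z b hzb
  have hsnd : ∀ n, D.parent^[n] s ≠ t := fun n hn => hb s ⟨n, hn⟩ hvs
  obtain ⟨m, n, hmn, hzw⟩ := D.meet z s' s hzs' hus
  have hkm : k < m := by
    by_contra hcon
    push_neg at hcon
    apply hsnd ((k - m) + n)
    rw [Function.iterate_add_apply, ← hmn, ← Function.iterate_add_apply,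
      Nat.sub_add_cancel hcon, hk]
  have htroot : t ≠ D.root := by
    intro hroot
    obtain ⟨n', hn'⟩ := D.reach_root s
    exact hsnd n' (hn'.trans hroot.symm)
  have h1 : z ∈ D.bag (D.parent^[k] s') := D.interval z s' k m hkm.le hzs' hzw
  have h2 : z ∈ D.bag (D.parent^[k + 1] s') := D.interval z s' (k + 1) m hkm hzs' hzw
  rw [Function.iterate_succ_apply', hk] at h2
  rw [hk] at h1
  simp only [TreeDecomp.sigma, sigmaOf, if_neg htroot, Finset.mem_inter]
  exact ⟨h1, h2⟩

lemma edges_mapLe {G G' : SimpleGraph V} (h : G ≤ G') {u v : V} (q : G.Walk u v) :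
    (q.mapLe h).edges = q.edges := by
  unfold SimpleGraph.Walk.mapLe
  simp only [SimpleGraph.Walk.edges_map]
  have : Sym2.map ⇑(Hom.ofLE h) = id := by
    ext e; induction e using Sym2.ind; simp [Hom.ofLE_apply]
  rw [this, List.map_id]

lemma support_mapLe {G G' : SimpleGraph V} (h : G ≤ G') {u v : V} (q : G.Walk u v) :
    (q.mapLe h).support = q.support := by
  unfold SimpleGraph.Walk.mapLe
  simp only [SimpleGraph.Walk.support_map]
  have : ⇑(Hom.ofLE h) = id := rfl
  rw [this, List.map_id]

end GoodSafeAux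
section GoodSafeAux2

variable {G : SimpleGraph V}

/-- Truncation of a path starting in `γ(t)` that hits `σ(t)`: an initial segment
is a path of `G(t)` ending in `σ(t)`. -/
lemma single (D : TreeDecomp τ G) (t : τ) :
    ∀ {z y : V} (p : G.Walk z y), p.IsPath → z ∈ D.gamma t →
    (∃ w ∈ p.support, w ∈ D.sigma t) →
    ∃ w : V, w ∈ D.sigma t ∧ ∃ (q : (D.Gt t).Walk z w) (rest : G.Walk w y),
      q.IsPath ∧ (q.mapLe (Gt_le D t)).append rest = p := by
  intro z y p
  induction p with
  | nil =>
    intro _ hz hhit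
    obtain ⟨w, hwmem, hwσ⟩ := hhit
    simp only [SimpleGraph.Walk.support_nil, List.mem_singleton] at hwmem
    subst hwmem
    exact ⟨w, hwσ, SimpleGraph.Walk.nil, SimpleGraph.Walk.nil,
      SimpleGraph.Walk.IsPath.nil, by simp [SimpleGraph.Walk.mapLe]⟩
  | @cons z b y h p' ih =>
    intro hp hz hhit
    by_cases hzσ : z ∈ D.sigma t
    · exact ⟨z, hzσ, SimpleGraph.Walk.nil, SimpleGraph.Walk.cons h p',
        SimpleGraph.Walk.IsPath.nil, by simp [SimpleGraph.Walk.mapLe]⟩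
    · have hb : b ∈ D.gamma t := by
        by_contra hbγ
        exact hzσ (sep D t hz h hbγ)
      have hhit' : ∃ w ∈ p'.support, w ∈ D.sigma t := by
        obtain ⟨w, hw, hwσ⟩ := hhit
        rw [SimpleGraph.Walk.support_cons, List.mem_cons] at hw
        rcases hw with rfl | hw
        · exact absurd hwσ hzσ
        · exact ⟨w, hw, hwσ⟩
      obtain ⟨w, hwσ, q', rest, hq'path, heq⟩ := ih hp.of_cons hb hhit'
      have hadj : (D.Gt t).Adj z b := ⟨h, hz, hb, fun hc => hzσ hc.1⟩
      refine ⟨w, hwσ, SimpleGraph.Walk.cons hadj q', rest, ?_, ?_⟩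
      · apply hq'path.cons
        intro hzq'
        have hzp' : z ∈ p'.support := by
          rw [← heq, SimpleGraph.Walk.mem_support_append_iff]
          left
          rwa [support_mapLe]
        rw [SimpleGraph.Walk.cons_isPath_iff] at hp
        exact hp.2 hzp'
      · rw [show ((SimpleGraph.Walk.cons hadj q').mapLe (Gt_le D t))
            = SimpleGraph.Walk.cons h (q'.mapLe (Gt_le D t)) from rfl,
          SimpleGraph.Walk.cons_append, heq]

/-- Two-sided truncation: edge-disjoint paths of `G(t)` into `σ(t)` from both
endpoints. -/
lemma both (D : TreeDecomp τ G) (t : τ) {u v : V} (p : G.Walk u v) (hp : p.IsPath)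
    (hu : u ∈ D.gamma t) (hv : v ∈ D.gamma t)
    (hhit : ∃ w ∈ p.support, w ∈ D.sigma t) :
    ∃ w₁ : V, w₁ ∈ D.sigma t ∧ ∃ w₂ : V, w₂ ∈ D.sigma t ∧
    ∃ (q₁ : (D.Gt t).Walk u w₁) (q₂ : (D.Gt t).Walk v w₂),
      q₁.IsPath ∧ q₂.IsPath ∧ (∀ e ∈ q₁.edges, e ∈ p.edges) ∧
      (∀ e ∈ q₂.edges, e ∈ p.edges) ∧
      ∀ e, e ∈ q₁.edges → e ∈ q₂.edges → False := by
  have hhitrev : ∃ w ∈ p.reverse.support, w ∈ D.sigma t := by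
    simpa [SimpleGraph.Walk.support_reverse] using hhit
  obtain ⟨w₂, hw₂, q₂, rest, hq₂, heq⟩ := single D t p.reverse hp.reverse hv hhitrev
  have heq2 : rest.reverse.append ((q₂.mapLe (Gt_le D t)).reverse) = p := by
    rw [← SimpleGraph.Walk.reverse_append, heq, SimpleGraph.Walk.reverse_reverse]
  have hsplit : rest.reverse.edges ++ ((q₂.mapLe (Gt_le D t)).reverse).edges = p.edges := by
    rw [← SimpleGraph.Walk.edges_append, heq2]
  have hpath2 : rest.reverse.IsPath := by
    rw [← heq2] at hp
    exact hp.of_append_left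
  obtain ⟨w₁, hw₁, q₁, rest₁, hq₁, heq₁⟩ :=
    single D t rest.reverse hpath2 hu ⟨w₂, SimpleGraph.Walk.end_mem_support _, hw₂⟩
  have hq₁sub : ∀ e ∈ q₁.edges, e ∈ rest.reverse.edges := by
    intro e he
    rw [← heq₁, SimpleGraph.Walk.edges_append, List.mem_append]
    left
    rwa [edges_mapLe]
  have hq₂sub : ∀ e ∈ q₂.edges, e ∈ ((q₂.mapLe (Gt_le D t)).reverse).edges := by
    intro e he
    rw [SimpleGraph.Walk.edges_reverse, List.mem_reverse, edges_mapLe]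
    exact he
  have hnd : (rest.reverse.edges ++ ((q₂.mapLe (Gt_le D t)).reverse).edges).Nodup := by
    rw [hsplit]; exact hp.edges_nodup
  rw [List.nodup_append] at hnd
  refine ⟨w₁, hw₁, w₂, hw₂, q₁, q₂, hq₁, hq₂, ?_, ?_, ?_⟩
  · intro e he
    rw [← hsplit, List.mem_append]; exact Or.inl (hq₁sub e he)
  · intro e he
    rw [← hsplit, List.mem_append]; exact Or.inr (hq₂sub e he)
  · intro e he₁ he₂
    exact hnd.2.2 e (hq₁sub e he₁) e (hq₂sub e he₂) rfl

end GoodSafeAux2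
section GoodSafeAux3

variable {G : SimpleGraph V}

/-- One-sided truncation, packaged. -/
lemma single' (D : TreeDecomp τ G) (t : τ) {z y : V} (p : G.Walk z y) (hp : p.IsPath)
    (hz : z ∈ D.gamma t) (hhit : ∃ w ∈ p.support, w ∈ D.sigma t) :
    ∃ w : V, w ∈ D.sigma t ∧ ∃ q : (D.Gt t).Path z w,
      ∀ e ∈ (q : (D.Gt t).Walk z w).edges, e ∈ p.edges := by
  obtain ⟨w, hwσ, q, rest, hq, heq⟩ := single D t p hp hz hhit
  refine ⟨w, hwσ, ⟨q, hq⟩, fun e he => ?_⟩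
  rw [← heq, SimpleGraph.Walk.edges_append, List.mem_append]
  left
  rwa [edges_mapLe]

/-- The specification for the pair of truncations associated to a flow path. -/
def PieceSpec (D : TreeDecomp τ G) (t : τ) {u v : V} (p : G.Path u v)
    (o : Option (Σ w, (D.Gt t).Path u w) × Option (Σ w, (D.Gt t).Path v w)) : Prop :=
  (∀ w (q : (D.Gt t).Path u w), o.1 = some ⟨w, q⟩ →
      w ∈ D.sigma t ∧ ∀ e ∈ (q : (D.Gt t).Walk u w).edges, e ∈ (p : G.Walk u v).edges) ∧
  (∀ w (q : (D.Gt t).Path v w), o.2 = some ⟨w, q⟩ →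
      w ∈ D.sigma t ∧ ∀ e ∈ (q : (D.Gt t).Walk v w).edges, e ∈ (p : G.Walk u v).edges) ∧
  (∀ w (q : (D.Gt t).Path u w) w' (q' : (D.Gt t).Path v w'),
      o.1 = some ⟨w, q⟩ → o.2 = some ⟨w', q'⟩ →
      ∀ e ∈ (q : (D.Gt t).Walk u w).edges, e ∉ (q' : (D.Gt t).Walk v w').edges) ∧
  (u ∈ D.gamma t → (∃ x ∈ (p : G.Walk u v).support, x ∈ D.sigma t) → o.1.isSome) ∧
  (v ∈ D.gamma t → (∃ x ∈ (p : G.Walk u v).support, x ∈ D.sigma t) → o.2.isSome)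

lemma pieces_exist (D : TreeDecomp τ G) (t : τ) {u v : V} (p : G.Path u v) :
    ∃ o, PieceSpec D t p o := by
  by_cases hhit : ∃ x ∈ (p : G.Walk u v).support, x ∈ D.sigma t
  · by_cases hu : u ∈ D.gamma t
    · by_cases hv : v ∈ D.gamma t
      · obtain ⟨w₁, hw₁, w₂, hw₂, q₁, q₂, hq₁, hq₂, hs₁, hs₂, hdisj⟩ :=
          both D t (p : G.Walk u v) p.prop hu hv hhit
        refine ⟨(some ⟨w₁, ⟨q₁, hq₁⟩⟩, some ⟨w₂, ⟨q₂, hq₂⟩⟩), ?_, ?_, ?_, ?_, ?_⟩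
        · rintro w q hq
          rw [Option.some_inj] at hq
          obtain ⟨rfl, h2⟩ := Sigma.mk.inj_iff.mp hq
          rw [heq_iff_eq] at h2
          subst h2
          exact ⟨hw₁, hs₁⟩
        · rintro w q hq
          rw [Option.some_inj] at hq
          obtain ⟨rfl, h2⟩ := Sigma.mk.inj_iff.mp hq
          rw [heq_iff_eq] at h2
          subst h2
          exact ⟨hw₂, hs₂⟩
        · rintro w q w' q' hq hq'
          rw [Option.some_inj] at hq hq'
          obtain ⟨rfl, h2⟩ := Sigma.mk.inj_iff.mp hq
          obtain ⟨rfl, h2'⟩ := Sigma.mk.inj_iff.mp hq'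
          rw [heq_iff_eq] at h2 h2'
          subst h2; subst h2'
          exact fun e he he' => hdisj e he he'
        · intro _ _; rfl
        · intro _ _; rfl
      · obtain ⟨w₁, hw₁, q₁, hs₁⟩ := single' D t (p : G.Walk u v) p.prop hu hhit
        refine ⟨(some ⟨w₁, q₁⟩, none), ?_, ?_, ?_, ?_, ?_⟩
        · rintro w q hq
          rw [Option.some_inj] at hq
          obtain ⟨rfl, h2⟩ := Sigma.mk.inj_iff.mp hq
          rw [heq_iff_eq] at h2
          subst h2
          exact ⟨hw₁, hs₁⟩
        · rintro w q hq; exact absurd hq (by simp)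
        · rintro w q w' q' _ hq'; exact absurd hq' (by simp)
        · intro _ _; rfl
        · intro hv' _; exact absurd hv' hv
    · by_cases hv : v ∈ D.gamma t
      · have hhit' : ∃ x ∈ ((p : G.Walk u v).reverse).support, x ∈ D.sigma t := by
          simpa [SimpleGraph.Walk.support_reverse] using hhit
        obtain ⟨w₂, hw₂, q₂, hs₂⟩ :=
          single' D t ((p : G.Walk u v).reverse) p.prop.reverse hv hhit'
        refine ⟨(none, some ⟨w₂, q₂⟩), ?_, ?_, ?_, ?_, ?_⟩
        · rintro w q hq; exact absurd hq (by simp)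
        · rintro w q hq
          rw [Option.some_inj] at hq
          obtain ⟨rfl, h2⟩ := Sigma.mk.inj_iff.mp hq
          rw [heq_iff_eq] at h2
          subst h2
          refine ⟨hw₂, fun e he => ?_⟩
          have := hs₂ e he
          rwa [SimpleGraph.Walk.edges_reverse, List.mem_reverse] at this
        · rintro w q w' q' hq _; exact absurd hq (by simp)
        · intro hu' _; exact absurd hu' hu
        · intro _ _; rfl
      · refine ⟨(none, none), ?_, ?_, ?_, ?_, ?_⟩
        · rintro w q hq; exact absurd hq (by simp)
        · rintro w q hq; exact absurd hq (by simp)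
        · rintro w q w' q' hq _; exact absurd hq (by simp)
        · intro hu' _; exact absurd hu' hu
        · intro hv' _; exact absurd hv' hv
  · refine ⟨(none, none), ?_, ?_, ?_, ?_, ?_⟩
    · rintro w q hq; exact absurd hq (by simp)
    · rintro w q hq; exact absurd hq (by simp)
    · rintro w q w' q' hq _; exact absurd hq (by simp)
    · intro _ hhit'; exact absurd hhit' hhit
    · intro _ hhit'; exact absurd hhit' hhit

/-- The chosen pair of truncations. -/
noncomputable def pieces (D : TreeDecomp τ G) (t : τ) {u v : V} (p : G.Path u v) :
    Option (Σ w, (D.Gt t).Path u w) × Option (Σ w, (D.Gt t).Path v w) :=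
  Classical.choose (pieces_exist D t p)

lemma pieces_spec (D : TreeDecomp τ G) (t : τ) {u v : V} (p : G.Path u v) :
    PieceSpec D t p (pieces D t p) :=
  Classical.choose_spec (pieces_exist D t p)

end GoodSafeAux3
section GoodSafeAux4

lemma sum_sigma_pair {C : V → Type} [∀ x, Fintype (C x)] (g : ∀ x, C x → ℝ) :
    ∑ x, ∑ c : C x, g x c = ∑ j : Σ x, C x, g j.1 j.2 := by
  rw [← Finset.univ_sigma_univ, Finset.sum_sigma]

lemma sum_comm4 {A B : V → Type} [∀ b, Fintype (A b)] [∀ v, Fintype (B v)]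
    (Y : ∀ b, A b → ∀ v, B v → ℝ) :
    ∑ b, ∑ q : A b, ∑ v, ∑ p : B v, Y b q v p
      = ∑ v, ∑ p : B v, ∑ b, ∑ q : A b, Y b q v p := by
  rw [sum_sigma_pair (fun b q => ∑ v, ∑ p : B v, Y b q v p),
    sum_sigma_pair (fun v p => ∑ b, ∑ q : A b, Y b q v p)]
  have h1 : ∀ j : Σ b, A b, ∑ v, ∑ p : B v, Y j.1 j.2 v p
      = ∑ k : Σ v, B v, Y j.1 j.2 k.1 k.2 := fun j => sum_sigma_pair _
  have h2 : ∀ k : Σ v, B v, ∑ b, ∑ q : A b, Y b q k.1 k.2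
      = ∑ j : Σ b, A b, Y j.1 j.2 k.1 k.2 := fun k => sum_sigma_pair _
  rw [Finset.sum_congr rfl fun j _ => h1 j, Finset.sum_congr rfl fun k _ => h2 k]
  exact Finset.sum_comm

lemma sum_some_eq {H : SimpleGraph V} {z : V} (o : Option (Σ w, H.Path z w)) (c : ℝ) :
    ∑ w : V, ∑ q : H.Path z w, (if o = some ⟨w, q⟩ then c else 0)
      = if o.isSome then c else 0 := by
  cases o with
  | none => simp
  | some s =>
    obtain ⟨w₀, q₀⟩ := s
    rw [if_pos (by simp)]
    rw [Finset.sum_eq_single w₀]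
    · rw [Finset.sum_eq_single q₀]
      · rw [if_pos rfl]
      · intro q _ hq
        rw [if_neg]
        intro hc
        rw [Option.some_inj] at hc
        obtain ⟨-, h2⟩ := Sigma.mk.inj_iff.mp hc
        exact hq (heq_iff_eq.mp h2).symm
      · intro hq₀; exact absurd (Finset.mem_univ q₀) hq₀
    · intro w _ hw
      apply Finset.sum_eq_zero
      intro q _
      rw [if_neg]
      intro hc
      rw [Option.some_inj] at hc
      exact hw (Sigma.mk.inj_iff.mp hc).1.symm
    · intro hw₀; exact absurd (Finset.mem_univ w₀) hw₀

lemma sum_some_edge {H : SimpleGraph V} {z : V} (o : Option (Σ w, H.Path z w)) (c : ℝ)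
    (e : Sym2 V) :
    ∑ w : V, ∑ q : H.Path z w,
        (if e ∈ (q : H.Walk z w).edges ∧ o = some ⟨w, q⟩ then c else 0)
      = o.elim 0 (fun s => if e ∈ (s.2 : H.Walk z s.1).edges then c else 0) := by
  cases o with
  | none => simp
  | some s =>
    obtain ⟨w₀, q₀⟩ := s
    rw [Option.elim_some]
    rw [Finset.sum_eq_single w₀]
    · rw [Finset.sum_eq_single q₀]
      · by_cases he : e ∈ (q₀ : H.Walk z w₀).edges
        · rw [if_pos ⟨he, rfl⟩, if_pos he]
        · rw [if_neg (fun hc => he hc.1), if_neg he]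
      · intro q _ hq
        rw [if_neg]
        rintro ⟨-, hc⟩
        rw [Option.some_inj] at hc
        obtain ⟨-, h2⟩ := Sigma.mk.inj_iff.mp hc
        exact hq (heq_iff_eq.mp h2).symm
      · intro hq₀; exact absurd (Finset.mem_univ q₀) hq₀
    · intro w _ hw
      apply Finset.sum_eq_zero
      intro q _
      rw [if_neg]
      rintro ⟨-, hc⟩
      rw [Option.some_inj] at hc
      exact hw (Sigma.mk.inj_iff.mp hc).1.symm
    · intro hw₀; exact absurd (Finset.mem_univ w₀) hw₀

end GoodSafeAux4
section GoodSafeAux5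

variable {G : SimpleGraph V}

/-- Pointwise bound for the edge load of the truncated flow. -/
lemma point_bound (D : TreeDecomp τ G) (t : τ) {u v : V} (p : G.Path u v)
    (e : Sym2 V) (c : ℝ) (hc : 0 ≤ c) :
    ((pieces D t p).1).elim 0
        (fun s => if e ∈ (s.2 : (D.Gt t).Walk u s.1).edges then c else 0)
      + ((pieces D t p).2).elim 0
        (fun s => if e ∈ (s.2 : (D.Gt t).Walk v s.1).edges then c else 0)
      ≤ if e ∈ (p : G.Walk u v).edges then c else 0 := by
  obtain ⟨S1, S2, S3, -, -⟩ := pieces_spec D t p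
  have hrhs : (0:ℝ) ≤ if e ∈ (p : G.Walk u v).edges then c else 0 := by
    split_ifs <;> simp [hc]
  rcases h1 : (pieces D t p).1 with _ | ⟨w1, q1⟩ <;>
    rcases h2 : (pieces D t p).2 with _ | ⟨w2, q2⟩ <;>
      simp only [Option.elim_none, Option.elim_some, zero_add, add_zero]
  · exact hrhs
  · by_cases he : e ∈ (q2 : (D.Gt t).Walk v w2).edges
    · rw [if_pos he, if_pos ((S2 w2 q2 h2).2 e he)]
    · rw [if_neg he]; exact hrhs
  · by_cases he : e ∈ (q1 : (D.Gt t).Walk u w1).edges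
    · rw [if_pos he, if_pos ((S1 w1 q1 h1).2 e he)]
    · rw [if_neg he]; exact hrhs
  · by_cases he : e ∈ (q1 : (D.Gt t).Walk u w1).edges
    · have he2 : e ∉ (q2 : (D.Gt t).Walk v w2).edges := S3 w1 q1 w2 q2 h1 h2 e he
      rw [if_pos he, if_neg he2, if_pos ((S1 w1 q1 h1).2 e he), add_zero]
    · rw [if_neg he, zero_add]
      by_cases he2 : e ∈ (q2 : (D.Gt t).Walk v w2).edges
      · rw [if_pos he2, if_pos ((S2 w2 q2 h2).2 e he2)]
      · rw [if_neg he2]; exact hrhs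

end GoodSafeAux5

end


/-- **Remark (good nodes are safe).**
If `t` is good with respect to `(f, x)` then `t` is safe: there is a feasible flow in
`G(t)` routing `x(z)` (in particular, at least `x(z)/(4r)`) units of flow from every
`z ∈ γ(t)` to `σ(t)`. -/
theorem good_implies_safe
    {V : Type} [Fintype V] [DecidableEq V] {τ : Type} [Fintype τ]
    (G : SimpleGraph V) (cap : Sym2 V → ℕ) (M : Finset (V × V))
    (F : EDPFlow G cap M) (D : TreeDecomp τ G) (r : ℕ) (hr : 1 ≤ r)
    (hwidth : ∀ t' : τ, (D.bag t').card ≤ r)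
    (t : τ) (hgood : EGood D F t) :
    ESafe cap D r F t ∧
      ∃ gf : EFlowToSet (D.Gt t) cap (D.sigma t),
        ∀ z ∈ D.gamma t, F.marg z ≤ gf.fromAmt z := by
  classical
  -- reformulated goodness
  have hG : ∀ (u v : V) (p : G.Path u v), F.f u v p ≠ 0 →
      (u ∈ D.gamma t ∨ v ∈ D.gamma t) →
      ∃ x ∈ (p : G.Walk u v).support, x ∈ D.sigma t := by
    intro u v p hf hγ
    obtain ⟨w, hw1, hw2⟩ := hgood u v p hf hγ
    exact ⟨w, hw2, hw1⟩
  -- the truncated flow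
  set g : ∀ a b : V, (D.Gt t).Path a b → ℝ := fun a b q =>
    (∑ v, ∑ p : G.Path a v, if (pieces D t p).1 = some ⟨b, q⟩ then F.f a v p else 0) +
    (∑ u, ∑ p : G.Path u a, if (pieces D t p).2 = some ⟨b, q⟩ then F.f u a p else 0)
    with hgdef
  have hnn : ∀ a b q, 0 ≤ g a b q := by
    intro a b q
    apply add_nonneg <;>
      · apply Finset.sum_nonneg
        intro _ _
        apply Finset.sum_nonneg
        intro _ _
        split_ifs
        · exact F.nonneg _ _ _
        · exact le_refl 0
  -- flow paths end in σ(t)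
  have hends : ∀ a b q, g a b q ≠ 0 → b ∈ D.sigma t := by
    intro a b q hne
    by_contra hbσ
    apply hne
    rw [hgdef]
    have z1 : ∀ (v : V) (p : G.Path a v),
        (if (pieces D t p).1 = some ⟨b, q⟩ then F.f a v p else 0) = 0 := by
      intro v p
      rw [if_neg]
      intro hc
      exact hbσ ((pieces_spec D t p).1 b q hc).1
    have z2 : ∀ (u : V) (p : G.Path u a),
        (if (pieces D t p).2 = some ⟨b, q⟩ then F.f u a p else 0) = 0 := by
      intro u p
      rw [if_neg]
      intro hc
      exact hbσ ((pieces_spec D t p).2.1 b q hc).1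
    simp only [z1, z2, Finset.sum_const_zero, add_zero]
  -- edge feasibility
  have hfeas : ∀ e : Sym2 V, edgeLoad g e ≤ (cap e : ℝ) := by
    intro e
    have key1 : ∀ a : V,
        (∑ b, ∑ q : (D.Gt t).Path a b, if e ∈ (q : (D.Gt t).Walk a b).edges then
            (∑ v, ∑ p : G.Path a v,
              if (pieces D t p).1 = some ⟨b, q⟩ then F.f a v p else 0) else 0)
        = ∑ v, ∑ p : G.Path a v, ((pieces D t p).1).elim 0
            (fun s => if e ∈ (s.2 : (D.Gt t).Walk a s.1).edges then F.f a v p else 0) := by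
      intro a
      have step1 : ∀ (b : V) (q : (D.Gt t).Path a b),
          (if e ∈ (q : (D.Gt t).Walk a b).edges then
            (∑ v, ∑ p : G.Path a v,
              if (pieces D t p).1 = some ⟨b, q⟩ then F.f a v p else 0) else 0)
          = ∑ v, ∑ p : G.Path a v,
              if e ∈ (q : (D.Gt t).Walk a b).edges ∧ (pieces D t p).1 = some ⟨b, q⟩
                then F.f a v p else 0 := by
        intro b q
        by_cases he : e ∈ (q : (D.Gt t).Walk a b).edges <;> simp [he]
      rw [Finset.sum_congr rfl fun b _ => Finset.sum_congr rfl fun q _ => step1 b q]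
      rw [sum_comm4 (fun (b : V) (q : (D.Gt t).Path a b) (v : V) (p : G.Path a v) =>
        if e ∈ (q : (D.Gt t).Walk a b).edges ∧ (pieces D t p).1 = some ⟨b, q⟩
          then F.f a v p else 0)]
      exact Finset.sum_congr rfl fun v _ => Finset.sum_congr rfl fun p _ =>
        sum_some_edge ((pieces D t p).1) (F.f a v p) e
    have key2 : ∀ a : V,
        (∑ b, ∑ q : (D.Gt t).Path a b, if e ∈ (q : (D.Gt t).Walk a b).edges then
            (∑ u, ∑ p : G.Path u a,
              if (pieces D t p).2 = some ⟨b, q⟩ then F.f u a p else 0) else 0)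
        = ∑ u, ∑ p : G.Path u a, ((pieces D t p).2).elim 0
            (fun s => if e ∈ (s.2 : (D.Gt t).Walk a s.1).edges then F.f u a p else 0) := by
      intro a
      have step1 : ∀ (b : V) (q : (D.Gt t).Path a b),
          (if e ∈ (q : (D.Gt t).Walk a b).edges then
            (∑ u, ∑ p : G.Path u a,
              if (pieces D t p).2 = some ⟨b, q⟩ then F.f u a p else 0) else 0)
          = ∑ u, ∑ p : G.Path u a,
              if e ∈ (q : (D.Gt t).Walk a b).edges ∧ (pieces D t p).2 = some ⟨b, q⟩
                then F.f u a p else 0 := by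
        intro b q
        by_cases he : e ∈ (q : (D.Gt t).Walk a b).edges <;> simp [he]
      rw [Finset.sum_congr rfl fun b _ => Finset.sum_congr rfl fun q _ => step1 b q]
      rw [sum_comm4 (fun (b : V) (q : (D.Gt t).Path a b) (u : V) (p : G.Path u a) =>
        if e ∈ (q : (D.Gt t).Walk a b).edges ∧ (pieces D t p).2 = some ⟨b, q⟩
          then F.f u a p else 0)]
      exact Finset.sum_congr rfl fun u _ => Finset.sum_congr rfl fun p _ =>
        sum_some_edge ((pieces D t p).2) (F.f u a p) e
    have hsplit : edgeLoad g e
        = (∑ a, ∑ v, ∑ p : G.Path a v, ((pieces D t p).1).elim 0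
            (fun s => if e ∈ (s.2 : (D.Gt t).Walk a s.1).edges then F.f a v p else 0))
        + (∑ a, ∑ u, ∑ p : G.Path u a, ((pieces D t p).2).elim 0
            (fun s => if e ∈ (s.2 : (D.Gt t).Walk a s.1).edges then F.f u a p else 0)) := by
      unfold edgeLoad
      rw [← Finset.sum_add_distrib]
      apply Finset.sum_congr rfl
      intro a _
      rw [← key1 a, ← key2 a, ← Finset.sum_add_distrib]
      apply Finset.sum_congr rfl
      intro b _
      rw [← Finset.sum_add_distrib]
      apply Finset.sum_congr rfl
      intro q _
      rw [hgdef]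
      split_ifs <;> simp
    rw [hsplit]
    have hswap : (∑ a, ∑ u, ∑ p : G.Path u a, ((pieces D t p).2).elim 0
            (fun s => if e ∈ (s.2 : (D.Gt t).Walk a s.1).edges then F.f u a p else 0))
        = ∑ u, ∑ a, ∑ p : G.Path u a, ((pieces D t p).2).elim 0
            (fun s => if e ∈ (s.2 : (D.Gt t).Walk a s.1).edges then F.f u a p else 0) :=
      Finset.sum_comm
    rw [hswap]
    have : ∀ u : V, (∑ v, ∑ p : G.Path u v, ((pieces D t p).1).elim 0
            (fun s => if e ∈ (s.2 : (D.Gt t).Walk u s.1).edges then F.f u v p else 0))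
        + (∑ v, ∑ p : G.Path u v, ((pieces D t p).2).elim 0
            (fun s => if e ∈ (s.2 : (D.Gt t).Walk v s.1).edges then F.f u v p else 0))
        ≤ ∑ v, ∑ p : G.Path u v,
            if e ∈ (p : G.Walk u v).edges then F.f u v p else 0 := by
      intro u
      rw [← Finset.sum_add_distrib]
      apply Finset.sum_le_sum
      intro v _
      rw [← Finset.sum_add_distrib]
      apply Finset.sum_le_sum
      intro p _
      exact point_bound D t p e (F.f u v p) (F.nonneg u v p)
    calc (∑ u, ∑ v, ∑ p : G.Path u v, ((pieces D t p).1).elim 0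
            (fun s => if e ∈ (s.2 : (D.Gt t).Walk u s.1).edges then F.f u v p else 0))
        + (∑ u, ∑ v, ∑ p : G.Path u v, ((pieces D t p).2).elim 0
            (fun s => if e ∈ (s.2 : (D.Gt t).Walk v s.1).edges then F.f u v p else 0))
        ≤ ∑ u, ∑ v, ∑ p : G.Path u v,
            if e ∈ (p : G.Walk u v).edges then F.f u v p else 0 := by
          rw [← Finset.sum_add_distrib]
          exact Finset.sum_le_sum fun u _ => this u
      _ = edgeLoad F.f e := rfl
      _ ≤ (cap e : ℝ) := F.feas e
  -- amount routed from each z ∈ γ(t)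
  have hamt : ∀ z ∈ D.gamma t, margOf F.f z = ∑ w, pairFlow g z w := by
    intro z hz
    have U1 : (∑ w, ∑ q : (D.Gt t).Path z w, ∑ v, ∑ p : G.Path z v,
          if (pieces D t p).1 = some ⟨w, q⟩ then F.f z v p else 0)
        = ∑ v, pairFlow F.f z v := by
      rw [sum_comm4 (fun (w : V) (q : (D.Gt t).Path z w) (v : V) (p : G.Path z v) =>
        if (pieces D t p).1 = some ⟨w, q⟩ then F.f z v p else 0)]
      apply Finset.sum_congr rfl
      intro v _
      unfold pairFlow
      apply Finset.sum_congr rfl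
      intro p _
      rw [sum_some_eq ((pieces D t p).1) (F.f z v p)]
      by_cases hf : F.f z v p = 0
      · rw [hf]; simp
      · rw [if_pos ((pieces_spec D t p).2.2.2.1 hz (hG z v p hf (Or.inl hz)))]
    have U2 : (∑ w, ∑ q : (D.Gt t).Path z w, ∑ u, ∑ p : G.Path u z,
          if (pieces D t p).2 = some ⟨w, q⟩ then F.f u z p else 0)
        = ∑ u, pairFlow F.f u z := by
      rw [sum_comm4 (fun (w : V) (q : (D.Gt t).Path z w) (u : V) (p : G.Path u z) =>
        if (pieces D t p).2 = some ⟨w, q⟩ then F.f u z p else 0)]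
      apply Finset.sum_congr rfl
      intro u _
      unfold pairFlow
      apply Finset.sum_congr rfl
      intro p _
      rw [sum_some_eq ((pieces D t p).2) (F.f u z p)]
      by_cases hf : F.f u z p = 0
      · rw [hf]; simp
      · rw [if_pos ((pieces_spec D t p).2.2.2.2 hz (hG u z p hf (Or.inr hz)))]
    have : ∑ w, pairFlow g z w
        = (∑ w, ∑ q : (D.Gt t).Path z w, ∑ v, ∑ p : G.Path z v,
            if (pieces D t p).1 = some ⟨w, q⟩ then F.f z v p else 0)
        + (∑ w, ∑ q : (D.Gt t).Path z w, ∑ u, ∑ p : G.Path u z,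
            if (pieces D t p).2 = some ⟨w, q⟩ then F.f u z p else 0) := by
      rw [← Finset.sum_add_distrib]
      apply Finset.sum_congr rfl
      intro w _
      unfold pairFlow
      rw [← Finset.sum_add_distrib]
    rw [this, U1, U2]
    rfl
  -- assemble
  have hmargnn : ∀ z : V, 0 ≤ F.marg z := by
    intro z
    apply add_nonneg <;>
      · apply Finset.sum_nonneg
        intro _ _
        apply Finset.sum_nonneg
        intro _ _
        exact F.nonneg _ _ _
  refine ⟨⟨⟨g, hnn, hends, hfeas⟩, ?_⟩, ⟨g, hnn, hends, hfeas⟩, ?_⟩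
  · intro z hz
    have h1 : F.marg z ≤ EFlowToSet.fromAmt ⟨g, hnn, hends, hfeas⟩ z :=
      le_of_eq (hamt z hz)
    refine le_trans ?_ h1
    apply div_le_self (hmargnn z)
    have : (1 : ℝ) ≤ (r : ℝ) := by exact_mod_cast hr
    nlinarith
  · intro z hz
    exact le_of_eq (hamt z hz)

end Paper
end

section
/- Let (G, k, (V^i)_{i=1}^k) be a Multicolored Clique instance with |V^i| = n for every i and n, k ≥ 2, and let (H, M, ℓ) with ℓ = k(n−1) + C(k,2) be the MaxNDP instance produced by the reduction. If H contains a family of ℓ pairwise vertex-disjoint paths, each connecting the two vertices of a distinct terminal pair of M, then G contains a k-clique {v^1, …, v^k} with v^i ∈ V^i for every i. -/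
open SimpleGraph Finset
open scoped Classical

namespace Paper

/-- The vertex set of the graph `H` produced by the reduction (with `k = K + 2`,
`n = N + 2`): the path vertices `x^i_{v,j}`, the terminals `s^i_v`, `t^i_v`, and the
connector vertices `p_{i,j}`.  (Vertices `x^i_{v,i}`, `s^i_{u^i}`, `t^i_{u^i}` and
`p_{i,j}` for `i ≥ j` are unused, isolated dummies; the distinguished vertex `u^i`
is chosen to be `0`.) -/
inductive HV (K N : ℕ) where
  | x : Fin (K + 2) → Fin (N + 2) → Fin (K + 2) → HV K N
  | s : Fin (K + 2) → Fin (N + 2) → HV K N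
  | t : Fin (K + 2) → Fin (N + 2) → HV K N
  | p : Fin (K + 2) → Fin (K + 2) → HV K N
  deriving DecidableEq, Fintype

/-- The index of the first vertex of the path `X^i_v` (the first element of
`{0, …, k−1} \ {i}`). -/
def firstIdx (K : ℕ) (i : Fin (K + 2)) : Fin (K + 2) := if i = 0 then 1 else 0

/-- The index of the last vertex of the path `X^i_v`. -/
def lastIdx (K : ℕ) (i : Fin (K + 2)) : Fin (K + 2) :=
  if i = Fin.last (K + 1) then ⟨K, by omega⟩ else Fin.last (K + 1)

/-- The adjacencies of the reduction graph `H`:  `s^i_v` is adjacent to the first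
vertices of `X^i_v` and `X^i_{u^i}`;  `t^i_v` to their last vertices;  `p_{i,j}`
(for `i < j`) to all `x^i_{v,j}` and all `x^j_{u,i}`;  and consecutive vertices of
each path `X^i_v` (the indices `0, …, k−1` skipping `i`) are adjacent. -/
def hrel (K N : ℕ) : HV K N → HV K N → Prop
  | HV.s i v, HV.x i' w j => i' = i ∧ v ≠ 0 ∧ (w = v ∨ w = 0) ∧ j = firstIdx K i
  | HV.t i v, HV.x i' w j => i' = i ∧ v ≠ 0 ∧ (w = v ∨ w = 0) ∧ j = lastIdx K i
  | HV.p i j, HV.x i' _w j' => i < j ∧ ((i' = i ∧ j' = j) ∨ (i' = j ∧ j' = i))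
  | HV.x i v j, HV.x i' v' j' => i' = i ∧ v' = v ∧ i ≠ j ∧ i ≠ j' ∧
      ((j' : ℕ) = (j : ℕ) + 1 ∨ ((j' : ℕ) = (j : ℕ) + 2 ∧ (i : ℕ) = (j : ℕ) + 1))
  | _, _ => False

/-- The graph `H` produced by the reduction. -/
def hgraph (K N : ℕ) : SimpleGraph (HV K N) := SimpleGraph.fromRel (hrel K N)

open scoped Classical in
/-- The terminal pairs `M = M_st ∪ M_x` of the reduction:  `(s^i_v, t^i_v)` for every
`i` and `v ≠ u^i = 0`, and `(x^i_{v,j}, x^j_{u,i})` for every edge `vu` of `G` with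
`v ∈ V^i`, `u ∈ V^j`, `i < j`. -/
noncomputable def Mpairs (K N : ℕ) (G : SimpleGraph (Fin (K + 2) × Fin (N + 2))) :
    Finset (HV K N × HV K N) :=
  Finset.univ.filter fun m : HV K N × HV K N =>
    (∃ (i : Fin (K + 2)) (v : Fin (N + 2)), v ≠ 0 ∧ m.1 = HV.s i v ∧ m.2 = HV.t i v) ∨
    (∃ (i j : Fin (K + 2)) (v u : Fin (N + 2)), i < j ∧ G.Adj (i, v) (j, u) ∧
      m.1 = HV.x i v j ∧ m.2 = HV.x j u i)

/-- The required number of routed pairs, `ℓ = k(n−1) + k(k−1)/2`. -/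
def ellKN (K N : ℕ) : ℕ := (K + 2) * (N + 1) + (K + 2) * (K + 1) / 2

/-- `G` (on vertex set `V = V^1 ⊎ ⋯ ⊎ V^k`, `V^i = {i} × Fin n`) has a multicolored
clique: a `k`-clique with exactly one vertex in each `V^i`. -/
def HasMulticoloredClique (K N : ℕ) (G : SimpleGraph (Fin (K + 2) × Fin (N + 2))) : Prop :=
  ∃ f : Fin (K + 2) → Fin (N + 2), ∀ i j, i ≠ j → G.Adj (i, f i) (j, f j)



variable {K N : ℕ}

def col : HV K N → Fin (K+2)
  | .x i _ _ => i
  | .s i _ => i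
  | .t i _ => i
  | .p i _ => i

def isP : HV K N → Prop
  | .p _ _ => True
  | _ => False

lemma adj_s {i : Fin (K+2)} {v : Fin (N+2)} {y : HV K N}
    (h : (hgraph K N).Adj (HV.s i v) y) :
    ∃ w, (w = v ∨ w = 0) ∧ v ≠ 0 ∧ y = HV.x i w (firstIdx K i) := by
  rw [hgraph, SimpleGraph.fromRel_adj] at h
  obtain ⟨hne, h | h⟩ := h
  · cases y with
    | x i' w j =>
      simp only [hrel] at h
      exact ⟨w, by tauto, h.2.1, by rw [h.1, h.2.2.2]⟩
    | s => simp [hrel] at h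
    | t => simp [hrel] at h
    | p => simp [hrel] at h
  · cases y <;> simp [hrel] at h

lemma adj_t {i : Fin (K+2)} {v : Fin (N+2)} {y : HV K N}
    (h : (hgraph K N).Adj (HV.t i v) y) :
    ∃ w, (w = v ∨ w = 0) ∧ v ≠ 0 ∧ y = HV.x i w (lastIdx K i) := by
  rw [hgraph, SimpleGraph.fromRel_adj] at h
  obtain ⟨hne, h | h⟩ := h
  · cases y with
    | x i' w j =>
      simp only [hrel] at h
      exact ⟨w, by tauto, h.2.1, by rw [h.1, h.2.2.2]⟩
    | s => simp [hrel] at h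
    | t => simp [hrel] at h
    | p => simp [hrel] at h
  · cases y <;> simp [hrel] at h

lemma adj_p {a b : Fin (K+2)} {y : HV K N}
    (h : (hgraph K N).Adj (HV.p a b) y) :
    a < b ∧ ∃ (c : Fin (K+2)) (w : Fin (N+2)) (e : Fin (K+2)),
      y = HV.x c w e ∧ ((c = a ∧ e = b) ∨ (c = b ∧ e = a)) := by
  rw [hgraph, SimpleGraph.fromRel_adj] at h
  obtain ⟨hne, h | h⟩ := h
  · cases y with
    | x i' w j => simp only [hrel] at h; exact ⟨h.1, i', w, j, rfl, by tauto⟩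
    | s => simp [hrel] at h
    | t => simp [hrel] at h
    | p => simp [hrel] at h
  · cases y <;> simp [hrel] at h

/-- adjacencies of an `x` vertex -/
lemma adj_x {i : Fin (K+2)} {v : Fin (N+2)} {j : Fin (K+2)} {y : HV K N}
    (h : (hgraph K N).Adj (HV.x i v j) y) :
    (∃ j' : Fin (K+2), y = HV.x i v j' ∧ i ≠ j ∧ i ≠ j' ∧
        (((j':ℕ) = j + 1 ∨ ((j':ℕ) = j + 2 ∧ (i:ℕ) = j + 1)) ∨
         ((j:ℕ) = j' + 1 ∨ ((j:ℕ) = j' + 2 ∧ (i:ℕ) = j' + 1)))) ∨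
    (∃ w, y = HV.s i w ∧ w ≠ 0 ∧ (v = w ∨ v = 0) ∧ j = firstIdx K i) ∨
    (∃ w, y = HV.t i w ∧ w ≠ 0 ∧ (v = w ∨ v = 0) ∧ j = lastIdx K i) ∨
    (∃ a b, y = HV.p a b ∧ a < b ∧ ((i = a ∧ j = b) ∨ (i = b ∧ j = a))) := by
  rw [hgraph, SimpleGraph.fromRel_adj] at h
  obtain ⟨hne, h | h⟩ := h
  · cases y with
    | x i' w j' =>
      simp only [hrel] at h
      obtain ⟨h1, h2, h3, h4, h5⟩ := h
      subst h1; subst h2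
      exact Or.inl ⟨j', rfl, h3, h4, Or.inl h5⟩
    | s => simp [hrel] at h
    | t => simp [hrel] at h
    | p => simp [hrel] at h
  · cases y with
    | x i' w j' =>
      simp only [hrel] at h
      obtain ⟨h1, h2, h3, h4, h5⟩ := h
      subst h1; subst h2
      exact Or.inl ⟨j', rfl, h4, h3, Or.inr h5⟩
    | s i' w =>
      simp only [hrel] at h
      obtain ⟨h1, h2, h3, h4⟩ := h
      subst h1
      exact Or.inr (Or.inl ⟨w, rfl, h2, h3, h4⟩)
    | t i' w =>
      simp only [hrel] at h
      obtain ⟨h1, h2, h3, h4⟩ := h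
      subst h1
      exact Or.inr (Or.inr (Or.inl ⟨w, rfl, h2, h3, h4⟩))
    | p a b =>
      simp only [hrel] at h
      exact Or.inr (Or.inr (Or.inr ⟨a, b, rfl, h.1, by tauto⟩))

lemma firstIdx_ne {i : Fin (K+2)} : firstIdx K i ≠ i := by
  unfold firstIdx
  split
  · subst ‹i = 0›; intro h; exact absurd (congrArg Fin.val h) (by simp [Fin.val_one])
  · intro h; exact ‹¬ i = 0› h.symm

lemma lastIdx_ne {i : Fin (K+2)} : lastIdx K i ≠ i := by
  unfold lastIdx
  split
  · subst ‹i = Fin.last (K+1)›; intro h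
    have := congrArg Fin.val h
    simp [Fin.last] at this
  · intro h; exact ‹¬ i = Fin.last (K+1)› h.symm

lemma firstIdx_le {i j : Fin (K+2)} (h : j ≠ i) : (firstIdx K i : ℕ) ≤ (j : ℕ) := by
  unfold firstIdx
  split
  · subst ‹i = 0›
    have : (j:ℕ) ≠ 0 := fun hc => h (Fin.ext (by simpa using hc))
    simp [Fin.val_one]; omega
  · simp

lemma le_lastIdx {i j : Fin (K+2)} (h : j ≠ i) : (j : ℕ) ≤ (lastIdx K i : ℕ) := by
  unfold lastIdx
  split
  · subst ‹i = Fin.last (K+1)›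
    have : (j:ℕ) ≠ K+1 := fun hc => h (Fin.ext (by simpa [Fin.last] using hc))
    have := j.isLt; simp; omega
  · have := j.isLt; simp [Fin.last]; omega

/-- every vertex on a walk is the final vertex or has a neighbor -/
lemma support_adj {u z e : HV K N} (W : (hgraph K N).Walk u e) (hz : z ∈ W.support) :
    z = e ∨ ∃ y, (hgraph K N).Adj z y := by
  induction W with
  | nil => simp at hz; exact Or.inl hz
  | cons h q ih =>
    rw [SimpleGraph.Walk.support_cons, List.mem_cons] at hz
    rcases hz with rfl | hz
    · exact Or.inr ⟨_, h⟩
    · exact ih hz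

lemma col_adj {u z : HV K N} (h : (hgraph K N).Adj u z) (hu : ¬ isP u) (hz : ¬ isP z) :
    col u = col z := by
  cases u with
  | x i v j =>
    rcases adj_x h with ⟨j', rfl, -⟩ | ⟨w, rfl, -⟩ | ⟨w, rfl, -⟩ | ⟨a, b, rfl, -⟩
    · rfl
    · rfl
    · rfl
    · exact absurd trivial hz
  | s i v => obtain ⟨w, -, -, rfl⟩ := adj_s h; rfl
  | t i v => obtain ⟨w, -, -, rfl⟩ := adj_t h; rfl
  | p a b => exact absurd trivial hu

lemma col_walk {u z : HV K N} (W : (hgraph K N).Walk u z)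
    (hW : ∀ y ∈ W.support, ¬ isP y) : col u = col z := by
  induction W with
  | nil => rfl
  | cons h q ih =>
    rw [col_adj h (hW _ (by simp)) (hW _ (by simp))]
    exact ih fun y hy => hW y (by simp [hy])

lemma exists_p {u z : HV K N} (W : (hgraph K N).Walk u z) (hu : ¬ isP u) (hz : ¬ isP z)
    (hcol : col u ≠ col z) : ∃ y ∈ W.support, isP y := by
  by_contra hc
  push_neg at hc
  exact hcol (col_walk W hc)

/-- main structural walk lemma for `s-t` paths: the tail walk visits every index. -/
lemma stwalk {i : Fin (K+2)} {v w : Fin (N+2)} :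
    ∀ (u e : HV K N) (q : (hgraph K N).Walk u e), e = HV.t i v →
      (∀ z ∈ q.support, ¬ isP z ∧ (∀ i' v', z ≠ HV.s i' v') ∧
        (z = HV.t i v ∨ ∀ i' v', z ≠ HV.t i' v')) →
      ∀ j : Fin (K+2), u = HV.x i w j →
      ∀ a : Fin (K+2), a ≠ i → (j:ℕ) ≤ (a:ℕ) → (a:ℕ) ≤ (lastIdx K i : ℕ) →
        HV.x i w a ∈ q.support := by
  intro u e q
  induction q with
  | nil => intro he _ j hu; rw [he] at hu; simp at hu
  | @cons u u₂ _ h q ih =>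
    intro he hsupp j hu a ha hja hal
    subst hu
    by_cases haj : (a : ℕ) = (j : ℕ)
    · have : a = j := Fin.ext haj
      subst this; simp
    rcases adj_x h with ⟨j', rfl, hij, hij', hstep⟩ | ⟨w', rfl, -, -, -⟩ | ⟨w', rfl, -, -, hj⟩ | ⟨aa, bb, rfl, -, -⟩
    · -- next is an x vertex
      have hj'a : (j' : ℕ) ≤ (a : ℕ) := by
        have hai : (a:ℕ) ≠ (i:ℕ) := fun hc => ha (Fin.ext hc)
        rcases hstep with (h1 | ⟨h1, h2⟩) | (h1 | ⟨h1, h2⟩) <;> omega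
      have := ih he (fun z hz => hsupp z (by simp [hz])) j' rfl a ha hj'a hal
      simp [this]
    · -- next is an s vertex : impossible
      exact absurd rfl ((hsupp _ (by simp)).2.1 i w')
    · -- next is a t vertex : j = lastIdx, so a = j, contradiction with haj
      subst hj
      exact absurd (le_antisymm hal hja) haj
    · -- next is a p vertex : impossible
      exact absurd trivial (hsupp (HV.p aa bb) (by simp)).1

lemma sum_all_one {α : Type*} (s : Finset α) (f : α → ℕ) (h1 : ∀ x ∈ s, 1 ≤ f x)
    (h2 : ∑ x ∈ s, f x ≤ s.card) : ∀ x ∈ s, f x = 1 := by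
  intro x hx
  by_contra hne
  have hlt : ∑ _y ∈ s, (1:ℕ) < ∑ y ∈ s, f y :=
    Finset.sum_lt_sum h1 ⟨x, hx, by have := h1 x hx; omega⟩
  simp only [Finset.sum_const, smul_eq_mul, mul_one] at hlt
  omega

lemma ltcard :
    ((Finset.univ : Finset (Fin (K+2) × Fin (K+2))).filter fun ab => ab.1 < ab.2).card
      = (K+2)*(K+1)/2 := by
  classical
  set L := ((Finset.univ : Finset (Fin (K+2) × Fin (K+2))).filter fun ab => ab.1 < ab.2)
  set Gt := ((Finset.univ : Finset (Fin (K+2) × Fin (K+2))).filter fun ab => ab.2 < ab.1)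
  have himg : L.image Prod.swap = Gt := by
    ext ab
    simp only [L, Gt, Finset.mem_image, Finset.mem_filter, Finset.mem_univ, true_and]
    constructor
    · rintro ⟨cd, hcd, rfl⟩; exact hcd
    · intro h; exact ⟨(ab.2, ab.1), h, by simp⟩
  have hswap : L.card = Gt.card := by
    rw [← himg, Finset.card_image_of_injective _ Prod.swap_injective]
  have hunion : L ∪ Gt = Finset.univ.filter fun ab : Fin (K+2) × Fin (K+2) => ab.1 ≠ ab.2 := by
    ext ab
    simp only [L, Gt, Finset.mem_union, Finset.mem_filter, Finset.mem_univ, true_and]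
    constructor
    · rintro (h | h)
      · exact ne_of_lt h
      · exact (ne_of_lt h).symm
    · intro h; exact lt_or_gt_of_ne h
  have hdisj : Disjoint L Gt := by
    rw [Finset.disjoint_left]
    intro ab h1 h2
    simp only [L, Gt, Finset.mem_filter] at h1 h2
    exact absurd (h1.2.trans h2.2) (lt_irrefl _)
  have hne : (Finset.univ.filter fun ab : Fin (K+2) × Fin (K+2) => ab.1 ≠ ab.2).card
      = (K+2)*(K+1) := by
    have : (Finset.univ.filter fun ab : Fin (K+2) × Fin (K+2) => ab.1 ≠ ab.2)
        = (Finset.univ : Finset (Fin (K+2))).offDiag := by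
      ext ab
      simp [Finset.mem_offDiag]
    rw [this, Finset.offDiag_card]
    simp only [Finset.card_univ, Fintype.card_fin]
    rw [show (K+2)*(K+2) = (K+2)*(K+1) + (K+2) from by ring, Nat.add_sub_cancel]
  have hcards : L.card + Gt.card = (K+2)*(K+1) := by
    rw [← hne, ← hunion, Finset.card_union_of_disjoint hdisj]
  set t := (K+2)*(K+1)
  omega

def stIdx : HV K N → Fin (K+2) × Fin (N+2)
  | .s i v => (i, v)
  | _ => (0, 0)

def cIdx : HV K N → Fin (K+2) × Fin (K+2)
  | .x i _ j => (i, j)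
  | _ => (0, 0)


/-- **From disjoint paths to a multicolored clique.**
If the MaxNDP instance `(H, M, ℓ)` produced by the reduction (with unit node
capacities and `ℓ = k(n−1) + k(k−1)/2`, `k = K + 2`, `n = N + 2`) admits a family of
`ℓ` pairwise vertex-disjoint paths, each connecting the two vertices of a distinct
terminal pair of `M`, then `G` contains a multicolored `k`-clique. -/
theorem disjoint_paths_to_clique (K N : ℕ)
    (G : SimpleGraph (Fin (K + 2) × Fin (N + 2)))
    (hroute : HasNDPRouting (hgraph K N) (fun _ => 1) (Mpairs K N G) 1
      ((ellKN K N : ℕ) : ℝ)) :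
    HasMulticoloredClique K N G := by
  classical
  obtain ⟨R, route, hRM, hcard, hcap⟩ := hroute
  -- pairwise vertex-disjointness of the routed paths
  have hdisj : ∀ m (hm : m ∈ R) m' (hm' : m' ∈ R), m ≠ m' → ∀ z,
      z ∈ (route m hm).val.support → z ∈ (route m' hm').val.support → False := by
    intro m hm m' hm' hne z h1 h2
    have hsub : ({⟨m, hm⟩, ⟨m', hm'⟩} : Finset {x // x ∈ R}) ⊆
        R.attach.filter fun mm => z ∈ (route mm.1 mm.2).val.support := by
      intro mm hmm
      simp only [Finset.mem_insert, Finset.mem_singleton] at hmm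
      rcases hmm with rfl | rfl <;>
        simp only [Finset.mem_filter, Finset.mem_attach, true_and] <;> assumption
    have hnm : (⟨m, hm⟩ : {x // x ∈ R}) ∉ ({⟨m', hm'⟩} : Finset {x // x ∈ R}) := by
      simp only [Finset.mem_singleton]
      exact fun hc => hne (congrArg Subtype.val hc)
    have h2le : 2 ≤ (R.attach.filter fun mm => z ∈ (route mm.1 mm.2).val.support).card := by
      have hc := Finset.card_le_card hsub
      rwa [Finset.card_insert_of_notMem hnm, Finset.card_singleton] at hc
    have := hcap z
    simp only [mul_one] at this
    omega
  -- decoding membership in M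
  have hM : ∀ m ∈ R,
      (∃ (i : Fin (K+2)) (v : Fin (N+2)), v ≠ 0 ∧ m.1 = HV.s i v ∧ m.2 = HV.t i v) ∨
      (∃ (i j : Fin (K+2)) (v u : Fin (N+2)), i < j ∧ G.Adj (i, v) (j, u) ∧
        m.1 = HV.x i v j ∧ m.2 = HV.x j u i) := by
    intro m hm
    have := hRM hm
    simpa only [Mpairs, Finset.mem_filter, Finset.mem_univ, true_and] using this
  -- split R into s-t pairs and x pairs
  set PSt : HV K N × HV K N → Prop := fun m => ∃ i v', m.1 = HV.s i v' with hPSt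
  set Rst := R.filter PSt with hRstdef
  set Rx := R.filter (fun m => ¬ PSt m) with hRxdef
  have hmemRst : ∀ m ∈ Rst, m ∈ R := fun m hm => Finset.mem_of_mem_filter _ hm
  have hmemRx : ∀ m ∈ Rx, m ∈ R := fun m hm => Finset.mem_of_mem_filter _ hm
  have hstsh : ∀ m ∈ Rst, ∃ (i : Fin (K+2)) (v : Fin (N+2)), v ≠ 0 ∧
      m = (HV.s i v, HV.t i v) := by
    intro m hm
    have hP : PSt m := (Finset.mem_filter.mp hm).2
    rcases hM m (hmemRst m hm) with ⟨i, v, hv, h1, h2⟩ | ⟨i, j, v, u, hij, hadj, h1, h2⟩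
    · exact ⟨i, v, hv, Prod.ext h1 h2⟩
    · obtain ⟨i', v', hP⟩ := hP
      rw [h1] at hP
      exact absurd hP (by simp)
  have hxsh : ∀ m ∈ Rx, ∃ (i j : Fin (K+2)) (v u : Fin (N+2)), i < j ∧
      G.Adj (i, v) (j, u) ∧ m = (HV.x i v j, HV.x j u i) := by
    intro m hm
    have hP : ¬ PSt m := (Finset.mem_filter.mp hm).2
    rcases hM m (hmemRx m hm) with ⟨i, v, hv, h1, h2⟩ | ⟨i, j, v, u, hij, hadj, h1, h2⟩
    · exact absurd ⟨i, v, h1⟩ hP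
    · exact ⟨i, j, v, u, hij, hadj, Prod.ext h1 h2⟩
  -- counting s-t pairs
  have hstinj : Set.InjOn (fun m : HV K N × HV K N => stIdx m.1) ↑Rst := by
    intro m hm m' hm' heq
    obtain ⟨i, v, hv, rfl⟩ := hstsh m hm
    obtain ⟨i', v', hv', rfl⟩ := hstsh m' hm'
    simp only [stIdx, Prod.mk.injEq] at heq
    rw [heq.1, heq.2]
  have hT : ((Finset.univ : Finset (Fin (K+2))) ×ˢ
      ((Finset.univ : Finset (Fin (N+2))).erase 0)).card = (K+2)*(N+1) := by
    rw [Finset.card_product, Finset.card_erase_of_mem (Finset.mem_univ _)]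
    simp
  have hstmaps : ∀ m ∈ Rst, stIdx m.1 ∈ (Finset.univ : Finset (Fin (K+2))) ×ˢ
      ((Finset.univ : Finset (Fin (N+2))).erase 0) := by
    intro m hm
    obtain ⟨i, v, hv, rfl⟩ := hstsh m hm
    simp [stIdx, Finset.mem_product, hv]
  have hRstle : Rst.card ≤ (K+2)*(N+1) := by
    rw [← hT]
    exact Finset.card_le_card_of_injOn _ hstmaps hstinj
  -- the p-vertices on the x-paths
  set Ps : {m // m ∈ Rx} → Finset (HV K N) := fun mm =>
    ((route mm.1 (hmemRx mm.1 mm.2)).val.support.toFinset.filter isP) with hPsdef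
  have hPmem : ∀ (mm : {m // m ∈ Rx}) z, z ∈ Ps mm ↔
      (z ∈ (route mm.1 (hmemRx mm.1 mm.2)).val.support ∧ isP z) := by
    intro mm z
    simp [hPsdef, Finset.mem_filter, List.mem_toFinset]
  have hPs1 : ∀ mm : {m // m ∈ Rx}, 1 ≤ (Ps mm).card := by
    intro mm
    obtain ⟨i, j, v, u, hij, hadj, hmeq⟩ := hxsh mm.1 mm.2
    have e1 : mm.1.1 = HV.x i v j := by rw [hmeq]
    have e2 : mm.1.2 = HV.x j u i := by rw [hmeq]
    have hcol : col mm.1.1 ≠ col mm.1.2 := by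
      rw [e1, e2]; exact fun hc => (ne_of_lt hij) hc
    have hex : ∃ y ∈ (route mm.1 (hmemRx mm.1 mm.2)).val.support, isP y := by
      refine exists_p _ ?_ ?_ hcol
      · rw [e1]; exact fun hc => hc
      · rw [e2]; exact fun hc => hc
    obtain ⟨y, hy1, hy2⟩ := hex
    refine Finset.card_pos.mpr ⟨y, ?_⟩
    rw [hPmem]; exact ⟨hy1, hy2⟩
  -- any p-vertex on a routed path satisfies a < b
  have hz_p : ∀ m (hm : m ∈ R) (a b : Fin (K+2)),
      HV.p a b ∈ (route m hm).val.support → a < b := by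
    intro m hm a b hz
    rcases support_adj _ hz with he | ⟨y, hy⟩
    · exfalso
      rcases hM m hm with ⟨i, v, hv, h1, h2⟩ | ⟨i, j, v, u, hij, hadj, h1, h2⟩ <;>
        rw [h2] at he <;> cases he
    · exact (adj_p hy).1
  set pV := ((Finset.univ : Finset (Fin (K+2) × Fin (K+2))).filter
      fun ab => ab.1 < ab.2).image (fun ab => (HV.p ab.1 ab.2 : HV K N)) with hpVdef
  have hPsub : ∀ mm : {m // m ∈ Rx}, Ps mm ⊆ pV := by
    intro mm z hz
    rw [hPmem] at hz
    obtain ⟨hz1, hz2⟩ := hz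
    obtain ⟨a, b, rfl⟩ : ∃ a b, z = HV.p a b := by
      cases z <;> simp only [isP] at hz2 <;> exact ⟨_, _, rfl⟩
    have hab := hz_p mm.1 (hmemRx mm.1 mm.2) a b hz1
    simp only [hpVdef, Finset.mem_image, Finset.mem_filter, Finset.mem_univ, true_and]
    exact ⟨(a, b), hab, rfl⟩
  have hPdisj : ∀ mm mm' : {m // m ∈ Rx}, mm ≠ mm' → Disjoint (Ps mm) (Ps mm') := by
    intro mm mm' hne
    rw [Finset.disjoint_left]
    intro z h1 h2
    rw [hPmem] at h1 h2
    exact hdisj mm.1 (hmemRx mm.1 mm.2) mm'.1 (hmemRx mm'.1 mm'.2)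
      (fun hc => hne (Subtype.ext hc)) z h1.1 h2.1
  have hBcard : (Rx.attach.biUnion Ps).card = ∑ mm ∈ Rx.attach, (Ps mm).card :=
    Finset.card_biUnion (fun mm _ mm' _ h => hPdisj mm mm' h)
  have hBsub : Rx.attach.biUnion Ps ⊆ pV := Finset.biUnion_subset.mpr fun mm _ => hPsub mm
  have hpVcard : pV.card = (K+2)*(K+1)/2 := by
    rw [hpVdef, Finset.card_image_of_injOn, ltcard]
    intro ab _ ab' _ h
    simp only [HV.p.injEq] at h
    exact Prod.ext h.1 h.2
  have hsum_le : ∑ mm ∈ Rx.attach, (Ps mm).card ≤ (K+2)*(K+1)/2 := by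
    rw [← hBcard, ← hpVcard]
    exact Finset.card_le_card hBsub
  have hRxle : Rx.card ≤ (K+2)*(K+1)/2 := by
    calc Rx.card = Rx.attach.card := (Finset.card_attach).symm
    _ = ∑ _mm ∈ Rx.attach, 1 := by simp
    _ ≤ ∑ mm ∈ Rx.attach, (Ps mm).card := Finset.sum_le_sum (fun mm _ => hPs1 mm)
    _ ≤ _ := hsum_le
  -- the counting equalities
  have hsplit : Rst.card + Rx.card = R.card := Finset.card_filter_add_card_filter_not _
  have hell : ellKN K N ≤ R.card := by exact_mod_cast hcard
  have hellval : ellKN K N = (K+2)*(N+1) + (K+2)*(K+1)/2 := rfl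
  have hsum2 : (K+2)*(N+1) + (K+2)*(K+1)/2 ≤ Rst.card + Rx.card := by
    rw [hsplit, ← hellval]; exact hell
  have hRstcard : Rst.card = (K+2)*(N+1) := by
    refine le_antisymm hRstle ?_
    have h1 : (K+2)*(N+1) + (K+2)*(K+1)/2 ≤ Rst.card + (K+2)*(K+1)/2 :=
      hsum2.trans (Nat.add_le_add_left hRxle _)
    exact Nat.le_of_add_le_add_right h1
  have hRxcard : Rx.card = (K+2)*(K+1)/2 := by
    refine le_antisymm hRxle ?_
    have h1 : (K+2)*(N+1) + (K+2)*(K+1)/2 ≤ (K+2)*(N+1) + Rx.card :=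
      hsum2.trans (Nat.add_le_add_right hRstle _)
    exact Nat.le_of_add_le_add_left h1
  have hPs_eq1 : ∀ mm ∈ Rx.attach, (Ps mm).card = 1 := by
    apply sum_all_one _ _ (fun mm _ => hPs1 mm)
    rw [Finset.card_attach, hRxcard]
    exact hsum_le
  have hBeq : Rx.attach.biUnion Ps = pV := by
    refine Finset.eq_of_subset_of_card_le hBsub ?_
    rw [hpVcard, hBcard, Finset.sum_congr rfl hPs_eq1]
    simp [hRxcard]
  -- every s-t pair is routed
  have hallst : ∀ (i : Fin (K+2)) (v : Fin (N+2)), v ≠ 0 → (HV.s i v, HV.t i v) ∈ R := by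
    intro i v hv
    have himg : Rst.image (fun m => stIdx m.1) = (Finset.univ : Finset (Fin (K+2))) ×ˢ
        ((Finset.univ : Finset (Fin (N+2))).erase 0) := by
      refine Finset.eq_of_subset_of_card_le ?_ ?_
      · intro z hz
        obtain ⟨m, hm, rfl⟩ := Finset.mem_image.mp hz
        exact hstmaps m hm
      · rw [hT, ← hRstcard]
        exact le_of_eq (Finset.card_image_of_injOn hstinj).symm
    have hmem : (i, v) ∈ Rst.image (fun m => stIdx m.1) := by
      rw [himg]; simp [Finset.mem_product, hv]
    obtain ⟨m, hm, heq⟩ := Finset.mem_image.mp hmem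
    obtain ⟨i', v', hv', rfl⟩ := hstsh m hm
    simp only [stIdx, Prod.mk.injEq] at heq
    rw [← heq.1, ← heq.2]
    exact hmemRst _ hm
  -- every p-vertex with a < b is covered by an x-path
  have hpcov : ∀ a b : Fin (K+2), a < b → ∃ mm : {m // m ∈ Rx},
      HV.p a b ∈ (route mm.1 (hmemRx mm.1 mm.2)).val.support := by
    intro a b hab
    have hmem : (HV.p a b : HV K N) ∈ pV := by
      simp only [hpVdef, Finset.mem_image, Finset.mem_filter, Finset.mem_univ, true_and]
      exact ⟨(a, b), hab, rfl⟩
    rw [← hBeq] at hmem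
    obtain ⟨mm, -, hmm⟩ := Finset.mem_biUnion.mp hmem
    rw [hPmem] at hmm
    exact ⟨mm, hmm.1⟩
  -- s vertices on routed paths
  have hz_s : ∀ m (hm : m ∈ R) (i' : Fin (K+2)) (v' : Fin (N+2)),
      HV.s i' v' ∈ (route m hm).val.support → m = (HV.s i' v', HV.t i' v') := by
    intro m hm i' v' hz
    by_cases hv' : v' = 0
    · exfalso
      subst hv'
      rcases support_adj _ hz with he | ⟨y, hy⟩
      · rcases hM m hm with ⟨i, v, hv, h1, h2⟩ | ⟨i, j, v, u, hij, hadj, h1, h2⟩ <;>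
          rw [h2] at he <;> cases he
      · obtain ⟨w, -, hv0, -⟩ := adj_s hy
        exact hv0 rfl
    · by_contra hne
      exact hdisj m hm _ (hallst i' v' hv') hne _ hz
        (SimpleGraph.Walk.start_mem_support _)
  -- t vertices on routed paths
  have hz_t : ∀ m (hm : m ∈ R) (i' : Fin (K+2)) (v' : Fin (N+2)),
      HV.t i' v' ∈ (route m hm).val.support → m = (HV.s i' v', HV.t i' v') := by
    intro m hm i' v' hz
    by_cases hv' : v' = 0
    · exfalso
      subst hv'
      rcases support_adj _ hz with he | ⟨y, hy⟩
      · rcases hM m hm with ⟨i, v, hv, h1, h2⟩ | ⟨i, j, v, u, hij, hadj, h1, h2⟩ <;>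
          rw [h2] at he
        · have : v = 0 := by
            have := (HV.t.injEq .. ).mp he.symm
            exact this.2
          exact hv this
        · cases he
      · obtain ⟨w, -, hv0, -⟩ := adj_t hy
        exact hv0 rfl
    · by_contra hne
      exact hdisj m hm _ (hallst i' v' hv') hne _ hz
        (SimpleGraph.Walk.end_mem_support _)
  -- structure of the s-t paths
  have hstw : ∀ (i : Fin (K+2)) (v : Fin (N+2)) (hv : v ≠ 0), ∃ w : Fin (N+2),
      (w = v ∨ w = 0) ∧ ∀ j : Fin (K+2), j ≠ i →
        HV.x i w j ∈ (route _ (hallst i v hv)).val.support := by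
    intro i v hv
    have hm0 : (HV.s i v, HV.t i v) ∈ R := hallst i v hv
    have hWp : (route _ hm0).val.IsPath := (route _ hm0).prop
    -- support facts for the whole path
    have hsupAll : ∀ z ∈ (route _ hm0).val.support, ¬ isP z ∧
        (∀ i' v', z = HV.t i' v' → i' = i ∧ v' = v) := by
      intro z hz
      constructor
      · intro hzP
        obtain ⟨a, b, rfl⟩ : ∃ a b, z = HV.p a b := by
          cases z <;> simp only [isP] at hzP <;> exact ⟨_, _, rfl⟩
        have hab := hz_p _ hm0 a b hz
        obtain ⟨mm, hmm⟩ := hpcov a b hab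
        have hnex : (HV.s i v, HV.t i v) ≠ mm.1 := by
          intro hc
          have := (Finset.mem_filter.mp mm.2).2
          rw [← hc] at this
          exact this ⟨i, v, rfl⟩
        exact hdisj _ hm0 mm.1 (hmemRx mm.1 mm.2) hnex _ hz hmm
      · intro i' v' hzt
        subst hzt
        have := hz_t _ hm0 i' v' hz
        have h1 := (Prod.mk.injEq ..).mp this
        have h2 := (HV.s.injEq ..).mp h1.1
        exact ⟨h2.1.symm, h2.2.symm⟩
    -- destructure the walk
    rcases hwalk : (route _ hm0).val with _ | ⟨hadj0, q⟩
    · obtain ⟨w, hwv, -, rfl⟩ := adj_s hadj0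
      refine ⟨w, hwv, fun j hj => ?_⟩
      have hsupq : ∀ z ∈ q.support, z ∈ (route _ hm0).val.support := by
        intro z hz
        rw [hwalk, SimpleGraph.Walk.support_cons]
        exact List.mem_cons_of_mem _ hz
      have hnodup := hWp.support_nodup
      rw [hwalk, SimpleGraph.Walk.support_cons] at hnodup
      have hcond : ∀ z ∈ q.support, ¬ isP z ∧
          (∀ i' v', z ≠ HV.s i' v') ∧
          (z = HV.t i v ∨ ∀ i' v', z ≠ HV.t i' v') := by
        intro z hz
        refine ⟨(hsupAll z (hsupq z hz)).1, ?_, ?_⟩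
        · rintro i' v' rfl
          have := hz_s _ hm0 i' v' (hsupq _ hz)
          have h1 := (Prod.mk.injEq ..).mp this
          have h2 := (HV.s.injEq ..).mp h1.1
          obtain ⟨rfl, rfl⟩ := h2
          exact (List.nodup_cons.mp hnodup).1 hz
        · by_cases hzt : ∃ i' v', z = HV.t i' v'
          · obtain ⟨i', v', rfl⟩ := hzt
            obtain ⟨rfl, rfl⟩ := (hsupAll _ (hsupq _ hz)).2 i' v' rfl
            exact Or.inl rfl
          · push_neg at hzt
            exact Or.inr hzt
      have := stwalk _ _ q rfl hcond (firstIdx K i) rfl j hj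
        (firstIdx_le hj) (le_lastIdx hj)
      rw [SimpleGraph.Walk.support_cons]
      exact List.mem_cons_of_mem _ this
  choose wv hwv1 hwv2 using hstw
  -- the x-paths pass through the right p-vertex
  have hsplitp : ∀ (i j : Fin (K+2)) (v u : Fin (N+2))
      (hm : (HV.x i v j, HV.x j u i) ∈ Rx), i < j →
      HV.p i j ∈ (route _ (hmemRx _ hm)).val.support := by
    intro i j v u hm hij
    set mm : {m // m ∈ Rx} := ⟨(HV.x i v j, HV.x j u i), hm⟩ with hmm
    have W' : (hgraph K N).Walk (HV.x i v j) (HV.x j u i) := (route _ (hmemRx _ hm)).val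
    have hc1 := hPs_eq1 mm (Finset.mem_attach _ _)
    obtain ⟨z0, hz0⟩ := Finset.card_eq_one.mp hc1
    have hz0mem : z0 ∈ Ps mm := by rw [hz0]; exact Finset.mem_singleton_self _
    rw [hPmem] at hz0mem
    obtain ⟨hz0sup, hz0P⟩ := hz0mem
    obtain ⟨a, b, rfl⟩ : ∃ a b, z0 = HV.p a b := by
      cases z0 <;> simp only [isP] at hz0P <;> exact ⟨_, _, rfl⟩
    have huniq : ∀ z' ∈ (route _ (hmemRx _ hm)).val.support, isP z' → z' = HV.p a b := by
      intro z' h1 h2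
      have : z' ∈ Ps mm := by rw [hPmem]; exact ⟨h1, h2⟩
      rw [hz0] at this
      exact Finset.mem_singleton.mp this
    have hab : a < b := hz_p _ (hmemRx _ hm) a b hz0sup
    have hWp' : (route _ (hmemRx _ hm)).val.IsPath := (route _ (hmemRx _ hm)).prop
    -- the end color
    have haj : a = j ∨ b = j := by
      have hd : ((route _ (hmemRx _ hm)).val.dropUntil _ hz0sup).IsPath :=
        hWp'.dropUntil hz0sup
      rcases hd2 : (route _ (hmemRx _ hm)).val.dropUntil _ hz0sup with _ | ⟨h', d'⟩
      case cons =>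
        rw [hd2] at hd
        obtain ⟨-, c, w', e, rfl, hce⟩ := adj_p h'
        have hsubd : ∀ z ∈ d'.support, z ∈ (route _ (hmemRx _ hm)).val.support := by
          intro z hz
          refine SimpleGraph.Walk.support_dropUntil_subset _ hz0sup ?_
          rw [hd2, SimpleGraph.Walk.support_cons]
          exact List.mem_cons_of_mem _ hz
        have hnodup' := hd.support_nodup
        rw [SimpleGraph.Walk.support_cons] at hnodup'
        have hnop : ∀ z ∈ d'.support, ¬ isP z := by
          intro z hz hzP
          have hzz := huniq z (hsubd z hz) hzP
          rw [hzz] at hz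
          exact (List.nodup_cons.mp hnodup').1 hz
        have hcy := col_walk d' hnop
        rcases hce with ⟨rfl, -⟩ | ⟨rfl, -⟩
        · exact Or.inl hcy
        · exact Or.inr hcy
    -- the start color
    have hai : a = i ∨ b = i := by
      have hmem2r : HV.p a b ∈ (route _ (hmemRx _ hm)).val.reverse.support := by
        rw [SimpleGraph.Walk.support_reverse]
        exact List.mem_reverse.mpr hz0sup
      have hd : ((route _ (hmemRx _ hm)).val.reverse.dropUntil _ hmem2r).IsPath :=
        hWp'.reverse.dropUntil hmem2r
      rcases hd2 : (route _ (hmemRx _ hm)).val.reverse.dropUntil _ hmem2r with _ | ⟨h', d'⟩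
      case cons =>
        rw [hd2] at hd
        obtain ⟨-, c, w', e, rfl, hce⟩ := adj_p h'
        have hsubd : ∀ z ∈ d'.support, z ∈ (route _ (hmemRx _ hm)).val.support := by
          intro z hz
          have h3 : z ∈ (route _ (hmemRx _ hm)).val.reverse.support := by
            refine SimpleGraph.Walk.support_dropUntil_subset _ hmem2r ?_
            rw [hd2, SimpleGraph.Walk.support_cons]
            exact List.mem_cons_of_mem _ hz
          rw [SimpleGraph.Walk.support_reverse] at h3
          exact List.mem_reverse.mp h3
        have hnodup' := hd.support_nodup
        rw [SimpleGraph.Walk.support_cons] at hnodup'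
        have hnop : ∀ z ∈ d'.support, ¬ isP z := by
          intro z hz hzP
          have hzz := huniq z (hsubd z hz) hzP
          rw [hzz] at hz
          exact (List.nodup_cons.mp hnodup').1 hz
        have hcy := col_walk d' hnop
        rcases hce with ⟨rfl, -⟩ | ⟨rfl, -⟩
        · exact Or.inl hcy
        · exact Or.inr hcy
    rcases hai with rfl | rfl <;> rcases haj with h2 | h2
    · exact absurd (h2 ▸ hij) (lt_irrefl _)
    · subst h2; exact hz0sup
    · exact absurd (h2 ▸ hab) (lt_asymm hij)
    · exact absurd h2 (ne_of_lt hij)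
  -- injectivity of the chosen path index
  have hwinj : ∀ (i : Fin (K+2)) (v v' : Fin (N+2)) (hv : v ≠ 0) (hv' : v' ≠ 0),
      wv i v hv = wv i v' hv' → v = v' := by
    intro i v v' hv hv' heq
    by_contra hne
    have h1 := hwv2 i v hv (firstIdx K i) firstIdx_ne
    have h2 := hwv2 i v' hv' (firstIdx K i) firstIdx_ne
    rw [heq] at h1
    refine hdisj _ (hallst i v hv) _ (hallst i v' hv') ?_ _ h1 h2
    intro hc
    have := congrArg Prod.fst hc
    simp only [HV.s.injEq] at this
    exact hne this.2
  -- for each color there is exactly one missed vertex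
  have hmiss : ∀ i : Fin (K+2), ∃ c : Fin (N+2), ∀ v0 : Fin (N+2),
      (∀ v (hv : v ≠ 0), wv i v hv ≠ v0) → v0 = c := by
    intro i
    set Ws : Finset (Fin (N+2)) := ((Finset.univ : Finset (Fin (N+2))).erase 0).attach.image
      (fun vv => wv i vv.1 (Finset.ne_of_mem_erase vv.2)) with hWsdef
    have hWscard : Ws.card = N+1 := by
      rw [hWsdef, Finset.card_image_of_injOn, Finset.card_attach,
        Finset.card_erase_of_mem (Finset.mem_univ _)]
      · simp
      · intro a _ b _ h
        exact Subtype.ext (hwinj i _ _ _ _ h)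
    have hcompl : ((Finset.univ : Finset (Fin (N+2))) \ Ws).card = 1 := by
      rw [Finset.card_sdiff_of_subset (Finset.subset_univ _), hWscard]
      simp
    obtain ⟨c, hc⟩ := Finset.card_eq_one.mp hcompl
    refine ⟨c, fun v0 hv0 => ?_⟩
    have hv0mem : v0 ∈ (Finset.univ : Finset (Fin (N+2))) \ Ws := by
      simp only [Finset.mem_sdiff, Finset.mem_univ, true_and, hWsdef, Finset.mem_image]
      rintro ⟨vv, -, heq⟩
      exact hv0 vv.1 (Finset.ne_of_mem_erase vv.2) heq
    rw [hc] at hv0mem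
    exact Finset.mem_singleton.mp hv0mem
  choose f hf using hmiss
  -- injectivity and surjectivity of the color pairs of the x-paths
  have hcinj : Set.InjOn (fun m : HV K N × HV K N => cIdx m.1) ↑Rx := by
    intro m hm m' hm' heq
    obtain ⟨i, j, v, u, hij, hadj, rfl⟩ := hxsh m (Finset.mem_coe.mp hm)
    obtain ⟨i', j', v', u', hij', hadj', rfl⟩ := hxsh m' (Finset.mem_coe.mp hm')
    simp only [cIdx, Prod.mk.injEq] at heq
    obtain ⟨rfl, rfl⟩ := heq
    by_contra hne
    have hp1 := hsplitp i j v u (Finset.mem_coe.mp hm) hij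
    have hp2 := hsplitp i j v' u' (Finset.mem_coe.mp hm') hij'
    exact hdisj _ _ _ _ hne _ hp1 hp2
  have hxcover : ∀ i j : Fin (K+2), i < j → ∃ (v u : Fin (N+2)),
      G.Adj (i, v) (j, u) ∧ (HV.x i v j, HV.x j u i) ∈ R := by
    intro i j hij
    have himg : Rx.image (fun m => cIdx m.1) =
        (Finset.univ : Finset (Fin (K+2) × Fin (K+2))).filter (fun ab => ab.1 < ab.2) := by
      refine Finset.eq_of_subset_of_card_le ?_ ?_
      · intro z hz
        obtain ⟨m, hm, rfl⟩ := Finset.mem_image.mp hz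
        obtain ⟨i', j', v, u, hij', hadj, rfl⟩ := hxsh m hm
        simp only [cIdx, Finset.mem_filter, Finset.mem_univ, true_and]
        exact hij'
      · rw [ltcard, ← hRxcard]
        exact le_of_eq (Finset.card_image_of_injOn hcinj).symm
    have hmem : (i, j) ∈ Rx.image (fun m => cIdx m.1) := by
      rw [himg]
      simp only [Finset.mem_filter, Finset.mem_univ, true_and]
      exact hij
    obtain ⟨m, hm, heq⟩ := Finset.mem_image.mp hmem
    obtain ⟨i', j', v, u, hij', hadj, rfl⟩ := hxsh m hm
    simp only [cIdx, Prod.mk.injEq] at heq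
    obtain ⟨rfl, rfl⟩ := heq
    exact ⟨v, u, hadj, hmemRx _ hm⟩
  -- assemble the clique
  refine ⟨f, ?_⟩
  have main : ∀ i j : Fin (K+2), i < j → G.Adj (i, f i) (j, f j) := by
    intro i j hij
    obtain ⟨v, u, hadj, hmR⟩ := hxcover i j hij
    have hvf : v = f i := by
      apply hf i v
      intro v' hv' heq
      have h1 := hwv2 i v' hv' j hij.ne'
      rw [heq] at h1
      have h2 : HV.x i v j ∈ (route _ hmR).val.support :=
        SimpleGraph.Walk.start_mem_support _
      refine hdisj _ (hallst i v' hv') _ hmR ?_ _ h1 h2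
      intro hc
      have hc1 := congrArg Prod.fst hc
      cases hc1
    have huf : u = f j := by
      apply hf j u
      intro v' hv' heq
      have h1 := hwv2 j v' hv' i hij.ne
      rw [heq] at h1
      have h2 : HV.x j u i ∈ (route _ hmR).val.support :=
        SimpleGraph.Walk.end_mem_support _
      refine hdisj _ (hallst j v' hv') _ hmR ?_ _ h1 h2
      intro hc
      have hc1 := congrArg Prod.fst hc
      cases hc1
    rw [← hvf, ← huf]
    exact hadj
  intro i j hne
  rcases lt_trichotomy i j with h | h | h
  · exact main i j h
  · exact absurd h hne
  · exact (main j i h).symm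

end Paper
end

section
/- Let G be an undirected graph with node capacities, let u ∈ V(G), and let X ⊆ V(G) be a set of vertices each of capacity 1. Suppose there is a feasible flow (respecting node capacities) that routes 1/2 unit of flow from every vertex of X to u. Then X is 1/4-node-flow-linked in G: there is a feasible multicommodity flow that simultaneously routes 1/(4|X|) units of flow from a to b for every ordered pair (a,b) ∈ X × X. -/
open SimpleGraph Finset
open scoped Classical

namespace Paper

lemma sum_path_ite_eq {V : Type} [Fintype V] [DecidableEq V] {G : SimpleGraph V}
    {a b : V} (W : G.Walk a b) (hW : W.IsPath) (Q : G.Walk a b → Prop)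
    [DecidablePred Q] [DecidableEq (G.Walk a b)] (x : ℝ) :
    (∑ r : G.Path a b, if W = (r : G.Walk a b) ∧ Q (r : G.Walk a b) then x else 0)
      = if Q W then x else 0 := by
  rw [Finset.sum_eq_single (⟨W, hW⟩ : G.Path a b)]
  · simp
  · intro r _ hr
    rw [if_neg]
    rintro ⟨h1, -⟩
    exact hr (Subtype.ext h1.symm)
  · intro h; exact absurd (Finset.mem_univ _) h

/-- **Clustering step: a flow to a single vertex makes `X` node-flow-linked.**
Let `G` be node-capacitated, `u ∈ V(G)`, and `X` a set of vertices of capacity `1`.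
If a feasible flow routes `1/2` unit of flow from every vertex of `X` to `u`, then `X`
is `1/4`-node-flow-linked in `G`: there is a feasible multicommodity flow routing
`1/(4|X|)` units of flow between every ordered pair of vertices of `X`. -/
theorem flow_to_vertex_implies_node_flow_linked
    {V : Type} [Fintype V] [DecidableEq V] (G : SimpleGraph V) (cap : V → ℕ)
    (u : V) (X : Finset V) (hcap : ∀ x ∈ X, cap x = 1)
    (gf : NFlowToSet G cap {u}) (hgf : ∀ x ∈ X, (1 : ℝ) / 2 ≤ gf.fromAmt x) :
    Nonempty (NMCFlow G cap fun a b =>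
      if a ∈ X ∧ b ∈ X then 1 / (4 * (X.card : ℝ)) else 0) := by
  classical
  set k : ℝ := (X.card : ℝ) with hk
  have hknn : (0 : ℝ) ≤ k := Nat.cast_nonneg _
  set A : V → ℝ := fun a => pairFlow gf.g a u with hAdef
  set L : V → V → ℝ :=
    (fun a w => ∑ p : G.Path a u, if w ∈ (p : G.Walk a u).support then gf.g a u p else 0)
    with hLdef
  have hAnn : ∀ a, 0 ≤ A a := fun a => Finset.sum_nonneg fun p _ => gf.nonneg a u p
  have hAeq : ∀ a, gf.fromAmt a = A a := by
    intro a
    unfold NFlowToSet.fromAmt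
    rw [Finset.sum_eq_single u]
    · intro v _ hv
      exact Finset.sum_eq_zero fun p _ => by
        by_contra hne
        exact hv (Finset.mem_singleton.mp (gf.ends a v p hne))
    · intro h; exact absurd (Finset.mem_univ u) h
  have hAhalf : ∀ a ∈ X, (1 : ℝ) / 2 ≤ A a := fun a ha => hAeq a ▸ hgf a ha
  have hApos : ∀ a ∈ X, (0 : ℝ) < A a := fun a ha =>
    lt_of_lt_of_le (by norm_num) (hAhalf a ha)
  have hLnn : ∀ a w, 0 ≤ L a w := by
    intro a w
    simp only [hLdef]
    refine Finset.sum_nonneg fun p _ => ?_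
    split_ifs
    · exact gf.nonneg a u p
    · exact le_rfl
  set c : V → V → ℝ := fun a b => 1 / (4 * k) / (A a * A b) with hcdef
  have hcnn : ∀ a b, 0 ≤ c a b :=
    fun a b => div_nonneg (by positivity) (mul_nonneg (hAnn a) (hAnn b))
  refine ⟨⟨fun a b r =>
    if a ∈ X ∧ b ∈ X then
      c a b * ∑ p : G.Path a u, ∑ q : G.Path b u,
        if ((p : G.Walk a u).append (q : G.Walk b u).reverse).bypass = (r : G.Walk a b)
          then gf.g a u p * gf.g b u q else 0
    else 0, ?_, ?_, ?_⟩⟩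
  · -- nonneg
    intro a b r
    split_ifs with h
    · refine mul_nonneg (hcnn a b) (Finset.sum_nonneg fun p _ => Finset.sum_nonneg fun q _ => ?_)
      split_ifs
      · exact mul_nonneg (gf.nonneg a u p) (gf.nonneg b u q)
      · exact le_rfl
    · exact le_rfl
  · -- routes
    intro a b
    by_cases h : a ∈ X ∧ b ∈ X
    · rw [if_pos h]
      have hval : pairFlow (fun a b (r : G.Path a b) =>
          if a ∈ X ∧ b ∈ X then
            c a b * ∑ p : G.Path a u, ∑ q : G.Path b u,
              if ((p : G.Walk a u).append (q : G.Walk b u).reverse).bypass = (r : G.Walk a b)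
                then gf.g a u p * gf.g b u q else 0
          else 0) a b = c a b * (A a * A b) := by
        unfold pairFlow
        simp only [if_pos h, ← Finset.mul_sum]
        congr 1
        rw [Finset.sum_comm]
        have hstep : ∀ p : G.Path a u,
            (∑ r : G.Path a b, ∑ q : G.Path b u,
              if ((p : G.Walk a u).append (q : G.Walk b u).reverse).bypass = (r : G.Walk a b)
                then gf.g a u p * gf.g b u q else 0)
            = ∑ q : G.Path b u, gf.g a u p * gf.g b u q := by
          intro p
          rw [Finset.sum_comm]
          refine Finset.sum_congr rfl fun q _ => ?_
          have := sum_path_ite_eq (G := G)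
            (((p : G.Walk a u).append (q : G.Walk b u).reverse).bypass)
            (SimpleGraph.Walk.bypass_isPath _) (fun _ => True)
            (gf.g a u p * gf.g b u q)
          simpa using this
        simp_rw [hstep]
        rw [hAdef]
        unfold pairFlow
        rw [← Finset.sum_mul_sum]
      rw [hval, hcdef]
      have hA0 : A a * A b ≠ 0 := ne_of_gt (mul_pos (hApos a h.1) (hApos b h.2))
      rw [div_mul_cancel₀ _ hA0]
    · rw [if_neg h]
      unfold pairFlow
      simp only [if_neg h]
      simp
  · -- feas
    intro w
    unfold vertLoad
    have hterm_nn : ∀ (a v : V) (p : G.Path a v),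
        0 ≤ (if w ∈ (p : G.Walk a v).support then gf.g a v p else 0) := by
      intro a v p; split_ifs
      · exact gf.nonneg a v p
      · exact le_rfl
    have key : ∀ a b : V,
        (∑ r : G.Path a b, if w ∈ (r : G.Walk a b).support then
          (if a ∈ X ∧ b ∈ X then
            c a b * ∑ p : G.Path a u, ∑ q : G.Path b u,
              if ((p : G.Walk a u).append (q : G.Walk b u).reverse).bypass = (r : G.Walk a b)
                then gf.g a u p * gf.g b u q else 0
          else 0) else 0)
        ≤ (if a ∈ X ∧ b ∈ X then 1 / (2 * k) * (L a w + L b w) else 0) := by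
      intro a b
      by_cases h : a ∈ X ∧ b ∈ X
      · rw [if_pos h]
        have hk1 : (1 : ℝ) ≤ k := by
          rw [hk]
          exact_mod_cast Finset.card_pos.mpr ⟨a, h.1⟩
        have hk0 : k ≠ 0 := by linarith
        calc (∑ r : G.Path a b, if w ∈ (r : G.Walk a b).support then
              (if a ∈ X ∧ b ∈ X then
                c a b * ∑ p : G.Path a u, ∑ q : G.Path b u,
                  if ((p : G.Walk a u).append (q : G.Walk b u).reverse).bypass = (r : G.Walk a b)
                    then gf.g a u p * gf.g b u q else 0
              else 0) else 0)
            = c a b * ∑ p : G.Path a u, ∑ q : G.Path b u,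
                (if w ∈ ((p : G.Walk a u).append (q : G.Walk b u).reverse).bypass.support
                  then gf.g a u p * gf.g b u q else 0) := by
              simp only [if_pos h]
              have hrw : ∀ r : G.Path a b,
                  (if w ∈ (r : G.Walk a b).support then
                    (∑ p : G.Path a u, ∑ q : G.Path b u,
                      if ((p : G.Walk a u).append (q : G.Walk b u).reverse).bypass
                          = (r : G.Walk a b)
                        then gf.g a u p * gf.g b u q else 0) else 0)
                  = ∑ p : G.Path a u, ∑ q : G.Path b u,
                      (if (((p : G.Walk a u).append (q : G.Walk b u).reverse).bypass
                            = (r : G.Walk a b)) ∧ w ∈ (r : G.Walk a b).support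
                        then gf.g a u p * gf.g b u q else 0) := by
                intro r
                by_cases hw : w ∈ (r : G.Walk a b).support
                · simp only [hw, if_true, and_true]
                · simp only [hw, if_false, and_false]
                  simp
              calc (∑ r : G.Path a b, if w ∈ (r : G.Walk a b).support then
                    (c a b * ∑ p : G.Path a u, ∑ q : G.Path b u,
                      if ((p : G.Walk a u).append (q : G.Walk b u).reverse).bypass
                          = (r : G.Walk a b)
                        then gf.g a u p * gf.g b u q else 0) else 0)
                  = ∑ r : G.Path a b, c a b * (if w ∈ (r : G.Walk a b).support then
                      (∑ p : G.Path a u, ∑ q : G.Path b u,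
                        if ((p : G.Walk a u).append (q : G.Walk b u).reverse).bypass
                            = (r : G.Walk a b)
                          then gf.g a u p * gf.g b u q else 0) else 0) := by
                    refine Finset.sum_congr rfl fun r _ => ?_
                    split_ifs
                    · rfl
                    · rw [mul_zero]
                _ = c a b * ∑ r : G.Path a b, ∑ p : G.Path a u, ∑ q : G.Path b u,
                      (if (((p : G.Walk a u).append (q : G.Walk b u).reverse).bypass
                            = (r : G.Walk a b)) ∧ w ∈ (r : G.Walk a b).support
                        then gf.g a u p * gf.g b u q else 0) := by
                    rw [← Finset.mul_sum]
                    congr 1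
                    exact Finset.sum_congr rfl fun r _ => hrw r
                _ = c a b * ∑ p : G.Path a u, ∑ q : G.Path b u,
                      (if w ∈ ((p : G.Walk a u).append (q : G.Walk b u).reverse).bypass.support
                        then gf.g a u p * gf.g b u q else 0) := by
                    congr 1
                    rw [Finset.sum_comm]
                    refine Finset.sum_congr rfl fun p _ => ?_
                    rw [Finset.sum_comm]
                    refine Finset.sum_congr rfl fun q _ => ?_
                    exact sum_path_ite_eq _ (SimpleGraph.Walk.bypass_isPath _)
                      (fun W' => w ∈ W'.support) _
          _ ≤ c a b * ∑ p : G.Path a u, ∑ q : G.Path b u,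
                ((if w ∈ (p : G.Walk a u).support then gf.g a u p * gf.g b u q else 0)
                  + (if w ∈ (q : G.Walk b u).support then gf.g a u p * gf.g b u q else 0)) := by
              refine mul_le_mul_of_nonneg_left ?_ (hcnn a b)
              refine Finset.sum_le_sum fun p _ => Finset.sum_le_sum fun q _ => ?_
              have hnn : 0 ≤ gf.g a u p * gf.g b u q :=
                mul_nonneg (gf.nonneg a u p) (gf.nonneg b u q)
              by_cases hw : w ∈ ((p : G.Walk a u).append (q : G.Walk b u).reverse).bypass.support
              · rw [if_pos hw]
                have hmem := SimpleGraph.Walk.support_bypass_subset _ hw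
                rw [SimpleGraph.Walk.mem_support_append_iff] at hmem
                rcases hmem with hm | hm
                · rw [if_pos hm]
                  have : (0:ℝ) ≤ if w ∈ (q : G.Walk b u).support
                      then gf.g a u p * gf.g b u q else 0 := by
                    split_ifs
                    · exact hnn
                    · exact le_rfl
                  linarith
                · rw [SimpleGraph.Walk.support_reverse, List.mem_reverse] at hm
                  rw [if_pos hm]
                  have : (0:ℝ) ≤ if w ∈ (p : G.Walk a u).support
                      then gf.g a u p * gf.g b u q else 0 := by
                    split_ifs
                    · exact hnn
                    · exact le_rfl
                  linarith
              · rw [if_neg hw]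
                have h1 : (0:ℝ) ≤ if w ∈ (p : G.Walk a u).support
                    then gf.g a u p * gf.g b u q else 0 := by
                  split_ifs
                  · exact hnn
                  · exact le_rfl
                have h2 : (0:ℝ) ≤ if w ∈ (q : G.Walk b u).support
                    then gf.g a u p * gf.g b u q else 0 := by
                  split_ifs
                  · exact hnn
                  · exact le_rfl
                linarith
          _ = c a b * (L a w * A b + A a * L b w) := by
              congr 1
              simp only [Finset.sum_add_distrib]
              congr 1
              · have : ∀ p : G.Path a u,
                    (∑ q : G.Path b u,
                      if w ∈ (p : G.Walk a u).support then gf.g a u p * gf.g b u q else 0)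
                    = (if w ∈ (p : G.Walk a u).support then gf.g a u p else 0) * A b := by
                  intro p
                  by_cases hw : w ∈ (p : G.Walk a u).support
                  · simp only [hw, if_true]
                    rw [hAdef]
                    unfold pairFlow
                    rw [Finset.mul_sum]
                  · simp [hw]
                simp_rw [this]
                rw [hLdef, ← Finset.sum_mul]
              · have : ∀ p : G.Path a u,
                    (∑ q : G.Path b u,
                      if w ∈ (q : G.Walk b u).support then gf.g a u p * gf.g b u q else 0)
                    = gf.g a u p * L b w := by
                  intro p
                  rw [hLdef]
                  dsimp only
                  rw [Finset.mul_sum]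
                  refine Finset.sum_congr rfl fun q _ => ?_
                  split_ifs
                  · rfl
                  · rw [mul_zero]
                simp_rw [this]
                rw [hAdef, ← Finset.sum_mul]
                rfl
          _ ≤ 1 / (2 * k) * (L a w + L b w) := by
              have hAa := hAhalf a h.1
              have hAb := hAhalf b h.2
              have hAap := hApos a h.1
              have hAbp := hApos b h.2
              have hLa := hLnn a w
              have hLb := hLnn b w
              have hck : c a b * (L a w * A b + A a * L b w)
                  = 1 / (4 * k) * ((L a w * A b + A a * L b w) / (A a * A b)) := by
                rw [hcdef]; ring
              rw [hck]
              have hkey : (L a w * A b + A a * L b w) / (A a * A b)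
                  ≤ 2 * (L a w + L b w) := by
                rw [div_le_iff₀ (mul_pos hAap hAbp)]
                nlinarith [mul_nonneg (mul_nonneg hLa (hAnn b)) (by linarith : (0:ℝ) ≤ 2 * A a - 1),
                  mul_nonneg (mul_nonneg hLb (hAnn a)) (by linarith : (0:ℝ) ≤ 2 * A b - 1)]
              have h4 : 1 / (4 * k) * (2 * (L a w + L b w))
                  = 1 / (2 * k) * (L a w + L b w) := by
                field_simp [hk0]
                ring
              calc 1 / (4 * k) * ((L a w * A b + A a * L b w) / (A a * A b))
                  ≤ 1 / (4 * k) * (2 * (L a w + L b w)) :=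
                    mul_le_mul_of_nonneg_left hkey (by positivity)
                _ = 1 / (2 * k) * (L a w + L b w) := h4
      · rw [if_neg h]
        simp only [if_neg h]
        simp
    calc (∑ a, ∑ b, ∑ r : G.Path a b, if w ∈ (r : G.Walk a b).support then
            (if a ∈ X ∧ b ∈ X then
              c a b * ∑ p : G.Path a u, ∑ q : G.Path b u,
                if ((p : G.Walk a u).append (q : G.Walk b u).reverse).bypass = (r : G.Walk a b)
                  then gf.g a u p * gf.g b u q else 0
            else 0) else 0)
        ≤ ∑ a, ∑ b, (if a ∈ X ∧ b ∈ X then 1 / (2 * k) * (L a w + L b w) else 0) :=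
          Finset.sum_le_sum fun a _ => Finset.sum_le_sum fun b _ => key a b
      _ = ∑ a ∈ X, ∑ b ∈ X, 1 / (2 * k) * (L a w + L b w) := by
          have h1 : ∀ a : V, (∑ b, if a ∈ X ∧ b ∈ X then 1 / (2 * k) * (L a w + L b w) else 0)
              = if a ∈ X then ∑ b ∈ X, 1 / (2 * k) * (L a w + L b w) else 0 := by
            intro a
            by_cases ha : a ∈ X
            · simp only [ha, true_and, if_true]
              rw [Finset.sum_ite_mem, Finset.univ_inter]
            · simp [ha]
          simp_rw [h1]
          rw [Finset.sum_ite_mem, Finset.univ_inter]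
      _ = ∑ a ∈ X, L a w := by
          rcases eq_or_ne k 0 with h0 | h0
          · have h0' : ((X.card : ℝ)) = 0 := by rw [← hk]; exact h0
            have : X = ∅ := Finset.card_eq_zero.mp (by exact_mod_cast h0')
            simp [this]
          · have hsum2 : (∑ a ∈ X, ∑ b ∈ X, (L a w + L b w)) = 2 * k * ∑ a ∈ X, L a w := by
              have hin : ∀ a : V, (∑ b ∈ X, (L a w + L b w)) = k * L a w + ∑ b ∈ X, L b w := by
                intro a
                rw [Finset.sum_add_distrib, Finset.sum_const, nsmul_eq_mul]
              simp_rw [hin]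
              rw [Finset.sum_add_distrib, Finset.sum_const, nsmul_eq_mul, ← Finset.mul_sum]
              ring
            simp_rw [← Finset.mul_sum]
            rw [hsum2]
            field_simp [h0]
      _ ≤ ∑ a ∈ X, ∑ v, ∑ p : G.Path a v, (if w ∈ (p : G.Walk a v).support
            then gf.g a v p else 0) := by
          refine Finset.sum_le_sum fun a _ => ?_
          rw [hLdef]
          exact Finset.single_le_sum
            (f := fun v => ∑ p : G.Path a v, if w ∈ (p : G.Walk a v).support then gf.g a v p else 0)
            (fun v _ => Finset.sum_nonneg fun p _ => hterm_nn a v p) (Finset.mem_univ u)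
      _ ≤ ∑ a, ∑ v, ∑ p : G.Path a v, (if w ∈ (p : G.Walk a v).support
            then gf.g a v p else 0) :=
          Finset.sum_le_sum_of_subset_of_nonneg X.subset_univ
            (fun a _ _ => Finset.sum_nonneg fun v _ => Finset.sum_nonneg fun p _ => hterm_nn a v p)
      _ ≤ (cap w : ℝ) := gf.feas w

end Paper
end
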